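/- arXiv:1003.4829 — 9 statements merged into one kernel-verified Lean document; each statement's English description precedes it below -/
import Mathlib

section
/- Let Ω be a finite set with at least two elements, and let G be a subgroup of the symmetric group Sym(Ω) that is solvable and acts primitively on Ω. Then the cardinality of Ω is a prime power: |Ω| = p^k for some prime p and some integer k ≥ 1. -/
open MulAction

/-- Key auxiliary lemma: a nontrivial normal subgroup of a primitive subgroup of `Perm Ω`
acts with a full orbit, so `card Ω` divides its cardinality. -/
lemma card_dvd_of_normal_ne_bot {Ω : Type*} [Fintype Ω]
    (G : Subgroup (Equiv.Perm Ω))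
    (hprim : MulAction.IsPretransitive G Ω ∧
      ∀ B : Set Ω, MulAction.IsBlock G B → MulAction.IsTrivialBlock B)
    (N : Subgroup G) [N.Normal] (hN : N ≠ ⊥) :
    Fintype.card Ω ∣ Nat.card N := by
  classical
  -- pick a nontrivial element of N
  obtain ⟨σ, hσ1⟩ := Subgroup.ne_bot_iff_exists_ne_one.mp hN
  have hσperm : ((σ : G) : Equiv.Perm Ω) ≠ 1 := by
    intro h
    exact hσ1 (Subtype.ext (Subtype.ext h))
  obtain ⟨a, ha⟩ : ∃ a : Ω, ((σ : G) : Equiv.Perm Ω) a ≠ a := by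
    by_contra h
    push_neg at h
    exact hσperm (Equiv.ext h)
  -- the orbit of a under N is a block for G
  have hblock : MulAction.IsBlock G (MulAction.orbit N a) :=
    MulAction.IsBlock.orbit_of_normal a
  have htriv := hprim.2 _ hblock
  have horbit : MulAction.orbit N a = Set.univ := by
    rcases htriv with h | h
    · exfalso
      have h1 : a ∈ MulAction.orbit N a := MulAction.mem_orbit_self a
      have h2 : ((σ : G) : Equiv.Perm Ω) a ∈ MulAction.orbit N a := by
        exact ⟨σ, rfl⟩
      exact ha (h h2 h1)
    · exact h
  -- orbit-stabilizer
  have hdvd : Nat.card (MulAction.orbit N a) ∣ Nat.card N := by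
    rw [Nat.card_congr (MulAction.orbitEquivQuotientStabilizer N a)]
    exact Subgroup.card_quotient_dvd_card _
  have hcard : Nat.card Ω = Nat.card (MulAction.orbit N a) := by
    rw [horbit]
    exact (Nat.card_congr (Equiv.Set.univ Ω)).symm
  rw [← Nat.card_eq_fintype_card, hcard]
  exact hdvd


/-- A group action is preprimitive if it is pretransitive and every block is trivial.
This matches Mathlib's `MulAction.IsPreprimitive`. -/
def IsPreprimitiveAction (G X : Type*) [Group G] [MulAction G X] : Prop :=
  MulAction.IsPretransitive G X ∧
    ∀ B : Set X, MulAction.IsBlock G B → MulAction.IsTrivialBlock B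

/-- If `G` is a solvable subgroup of the symmetric group of a finite set `Ω` with at least
two elements, acting primitively on `Ω`, then `|Ω|` is a prime power `p ^ k` with `k ≥ 1`. -/
theorem solvable_primitive_card_prime_pow {Ω : Type*} [Fintype Ω]
    (h2 : 2 ≤ Fintype.card Ω)
    (G : Subgroup (Equiv.Perm Ω)) (hsolv : IsSolvable G)
    (hprim : IsPreprimitiveAction G Ω) :
    ∃ (p k : ℕ), p.Prime ∧ 1 ≤ k ∧ Fintype.card Ω = p ^ k := by
  classical
  obtain ⟨htrans, hblocks⟩ := hprim
  -- G is nontrivial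
  have hGnt : Nontrivial G := by
    obtain ⟨a, b, hab⟩ := Fintype.exists_pair_of_one_lt_card h2
    obtain ⟨g, hg⟩ := htrans.exists_smul_eq b a
    refine ⟨g, 1, fun h => hab ?_⟩
    rw [h, one_smul] at hg
    exact hg.symm
  -- last nontrivial term of the derived series
  have hsol : ∃ n, derivedSeries G n = ⊥ := hsolv.solvable
  have hn : derivedSeries G (Nat.find hsol) = ⊥ := Nat.find_spec hsol
  have hn0 : Nat.find hsol ≠ 0 := by
    intro h
    rw [h, derivedSeries_zero] at hn
    obtain ⟨a, b, hab⟩ := hGnt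
    apply hab
    have ha : a ∈ (⊥ : Subgroup ↥G) := hn ▸ Subgroup.mem_top a
    have hb : b ∈ (⊥ : Subgroup ↥G) := hn ▸ Subgroup.mem_top b
    rw [Subgroup.mem_bot] at ha hb
    rw [ha, hb]
  set N : Subgroup G := derivedSeries G (Nat.find hsol - 1) with hNdef
  haveI : N.Normal := derivedSeries_normal _ _
  have hNbot : N ≠ ⊥ := Nat.find_min hsol (Nat.pred_lt hn0)
  have hNN : ⁅N, N⁆ = ⊥ := by
    have := hn
    rw [← Nat.succ_pred_eq_of_pos (Nat.pos_of_ne_zero hn0), derivedSeries_succ] at this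
    exact this
  have hNcomm : ∀ x y : G, x ∈ N → y ∈ N → Commute x y := by
    intro x y hx hy
    rw [← commutatorElement_eq_one_iff_commute, ← Subgroup.mem_bot, ← hNN]
    exact Subgroup.commutator_mem_commutator hx hy
  -- a prime dividing |N|
  set p := (Nat.card N).minFac with hpdef
  have hNcard : 1 < Nat.card N := N.one_lt_card_iff_ne_bot.mpr hNbot
  have hp : p.Prime := Nat.minFac_prime hNcard.ne'
  have hpdvd : p ∣ Nat.card N := Nat.minFac_dvd _
  haveI : Fact p.Prime := ⟨hp⟩
  -- the p-primary part of N
  let P : Subgroup G :=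
    { carrier := {x : G | x ∈ N ∧ ∃ m : ℕ, x ^ p ^ m = 1}
      one_mem' := ⟨N.one_mem, 0, one_pow _⟩
      mul_mem' := by
        rintro x y ⟨hxN, mx, hx⟩ ⟨hyN, my, hy⟩
        refine ⟨N.mul_mem hxN hyN, mx + my, ?_⟩
        have hc : Commute x y := hNcomm _ _ hxN hyN
        rw [hc.mul_pow]
        have h1 : x ^ p ^ (mx + my) = 1 := by rw [pow_add, pow_mul, hx, one_pow]
        have hy2 : y ^ p ^ (mx + my) = 1 := by
          rw [add_comm, pow_add, pow_mul, hy, one_pow]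
        rw [h1, hy2, one_mul]
      inv_mem' := by
        rintro x ⟨hxN, m, hx⟩
        exact ⟨N.inv_mem hxN, m, by rw [inv_pow, hx, inv_one]⟩ }
  haveI hPnormal : P.Normal := by
    constructor
    rintro x ⟨hxN, m, hx⟩ g
    refine ⟨(inferInstance : N.Normal).conj_mem x hxN g, m, ?_⟩
    rw [conj_pow, hx, mul_one, mul_inv_cancel]
  -- P is nontrivial
  haveI : Fintype N := Fintype.ofFinite N
  obtain ⟨x, hx⟩ := exists_prime_orderOf_dvd_card (G := N) p
    (by rw [← Nat.card_eq_fintype_card]; exact hpdvd)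
  have hxp : x ^ p = 1 := by rw [← hx]; exact pow_orderOf_eq_one x
  have hxP : (↑x : G) ∈ P := ⟨x.2, 1, by rw [pow_one]; exact_mod_cast hxp⟩
  have hx1 : (↑x : G) ≠ 1 := by
    intro h
    have : x = 1 := Subtype.ext h
    rw [this, orderOf_one] at hx
    exact hp.one_lt.ne hx
  have hPbot : P ≠ ⊥ := by
    intro h
    rw [h, Subgroup.mem_bot] at hxP
    exact hx1 hxP
  -- P is a p-group
  have hPp : IsPGroup p P := by
    intro g
    obtain ⟨m, hm⟩ := g.2.2
    exact ⟨m, Subtype.ext (by exact_mod_cast hm)⟩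
  obtain ⟨k, hk⟩ := (IsPGroup.iff_card (p := p) (G := P)).mp hPp
  -- conclude
  have hdvd : Fintype.card Ω ∣ Nat.card P :=
    card_dvd_of_normal_ne_bot G ⟨htrans, hblocks⟩ P hPbot
  rw [hk] at hdvd
  obtain ⟨i, hik, hi⟩ := (Nat.dvd_prime_pow hp).mp hdvd
  refine ⟨p, i, hp, ?_, hi⟩
  by_contra h
  push_neg at h
  interval_cases i
  rw [pow_zero] at hi
  omega
end

section
/- Let Ω be a finite set with at least two elements, and let G be a solvable subgroup of Sym(Ω) acting primitively on Ω. Then G has exactly one minimal normal subgroup A (i.e., a nontrivial normal subgroup of G that properly contains no nontrivial normal subgroup of G), and this subgroup A is an elementary abelian p-group for some prime p: A is commutative and every element a of A satisfies a^p = 1. -/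
/-- `A` is a minimal normal subgroup of `G`: it is nontrivial, normal, and the only normal
subgroup of `G` properly contained in it is the trivial one. -/
def IsMinimalNormal {G : Type*} [Group G] (A : Subgroup G) : Prop :=
  A ≠ ⊥ ∧ A.Normal ∧ ∀ B : Subgroup G, B.Normal → B < A → B = ⊥

/-- A nontrivial normal subgroup of a preprimitive permutation group acts pretransitively. -/
theorem aux_trans {Ω : Type*} (G : Subgroup (Equiv.Perm Ω))
    (hprim : IsPreprimitiveAction G Ω) (N : Subgroup G) [hNn : N.Normal]
    (hN : N ≠ ⊥) : MulAction.IsPretransitive N Ω := by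
  obtain ⟨⟨n, hnN⟩, hn1⟩ := Subgroup.ne_bot_iff_exists_ne_one.mp hN
  have hn1' : n ≠ 1 := fun h => hn1 (Subtype.ext h)
  have hex : ∃ a : Ω, n • a ≠ a := by
    by_contra h
    push_neg at h
    apply hn1'
    apply Subtype.ext
    exact Equiv.ext fun x => h x
  obtain ⟨a, ha⟩ := hex
  have hblock := hprim.2 (MulAction.orbit N a) (MulAction.IsBlock.orbit_of_normal a)
  rcases hblock with hs | huniv
  · exfalso
    apply ha
    have h1 : a ∈ MulAction.orbit N a := MulAction.mem_orbit_self a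
    have h2 : n • a ∈ MulAction.orbit N a := MulAction.mem_orbit a (⟨n, hnN⟩ : N)
    exact hs h2 h1
  · constructor
    intro x y
    have hx : x ∈ MulAction.orbit N a := by rw [huniv]; trivial
    have hy : y ∈ MulAction.orbit N a := by rw [huniv]; trivial
    obtain ⟨nx, hnx⟩ := MulAction.mem_orbit_iff.mp hx
    obtain ⟨ny, hny⟩ := MulAction.mem_orbit_iff.mp hy
    exact ⟨ny * nx⁻¹, by rw [mul_smul, ← hnx, inv_smul_smul, hny]⟩

open scoped commutatorElement

/-- A minimal normal subgroup of a solvable group is abelian. -/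
theorem aux_abelian {G : Type*} [Group G] [Group.IsSolvable G] {A : Subgroup G}
    (hA : IsMinimalNormal A) : ∀ a b : G, a ∈ A → b ∈ A → a * b = b * a := by
  obtain ⟨hbot, hnorm, hmin⟩ := hA
  haveI := hnorm
  have hle : ⁅A, A⁆ ≤ A := Subgroup.commutator_le_left A A
  have hne : ⁅A, A⁆ ≠ A := by
    intro heq
    -- then the commutator of the group A is ⊤, contradicting solvability
    have hmap : Subgroup.map A.subtype (commutator A) = A := by
      rw [commutator, Subgroup.map_commutator, ← MonoidHom.range_eq_map, Subgroup.range_subtype]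
      exact heq
    have htop : commutator A = ⊤ := by
      apply Subgroup.map_injective A.subtype_injective
      rw [hmap, ← MonoidHom.range_eq_map, Subgroup.range_subtype]
    have hds : ∀ n : ℕ, derivedSeries A n = ⊤ := by
      intro n
      induction n with
      | zero => rfl
      | succ n ih => rw [derivedSeries_succ, ih]; exact htop
    obtain ⟨⟨g, hgA⟩, hg1⟩ := Subgroup.ne_bot_iff_exists_ne_one.mp hbot
    exact not_solvable_of_mem_derivedSeries hg1 (fun n => by rw [hds n]; trivial)
      inferInstance
  have hcomm_bot : ⁅A, A⁆ = ⊥ := hmin _ inferInstance (lt_of_le_of_ne hle hne)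
  intro a b ha hb
  have : ⁅a, b⁆ ∈ ⁅A, A⁆ := Subgroup.commutator_mem_commutator ha hb
  rw [hcomm_bot, Subgroup.mem_bot] at this
  exact commutatorElement_eq_one_iff_mul_comm.mp this

/-- An abelian minimal normal subgroup of a finite group is elementary abelian. -/
theorem aux_elem {G : Type*} [Group G] [Finite G] {A : Subgroup G}
    (hA : IsMinimalNormal A) (hcomm : ∀ a b : G, a ∈ A → b ∈ A → a * b = b * a) :
    ∃ p : ℕ, p.Prime ∧ ∀ a : G, a ∈ A → a ^ p = 1 := by
  obtain ⟨hbot, hnorm, hmin⟩ := hA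
  haveI := hnorm
  haveI : Fintype A := Fintype.ofFinite A
  have hcard : Fintype.card A ≠ 1 := by
    intro h
    exact hbot (Subgroup.eq_bot_of_card_eq A (by simp [h]))
  obtain ⟨p, hp, hdvd⟩ := Nat.exists_prime_and_dvd hcard
  haveI := Fact.mk hp
  obtain ⟨g, hg⟩ := exists_prime_orderOf_dvd_card (G := A) p hdvd
  refine ⟨p, hp, ?_⟩
  set B : Subgroup G :=
    { carrier := {x : G | x ∈ A ∧ x ^ p = 1}
      one_mem' := ⟨A.one_mem, one_pow p⟩
      mul_mem' := by
        rintro x y ⟨hxA, hxp⟩ ⟨hyA, hyp⟩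
        refine ⟨A.mul_mem hxA hyA, ?_⟩
        have hc : Commute x y := hcomm x y hxA hyA
        rw [hc.mul_pow, hxp, hyp, one_mul]
      inv_mem' := by
        rintro x ⟨hxA, hxp⟩
        exact ⟨A.inv_mem hxA, by rw [inv_pow, hxp, inv_one]⟩ } with hBdef
  have hBnormal : B.Normal := by
    constructor
    rintro x ⟨hxA, hxp⟩ g
    refine ⟨hnorm.conj_mem x hxA g, ?_⟩
    have : (g * x * g⁻¹) ^ p = g * x ^ p * g⁻¹ := by
      rw [conj_pow]
    rw [this, hxp, mul_one, mul_inv_cancel]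
  have hBle : B ≤ A := fun x hx => hx.1
  have hBbot : B ≠ ⊥ := by
    intro h
    have hgB : (g : G) ∈ B := by
      refine ⟨g.2, ?_⟩
      have h1 : g ^ p = 1 := by rw [← hg]; exact pow_orderOf_eq_one g
      have : ((g ^ p : A) : G) = ((1 : A) : G) := by rw [h1]
      simpa using this
    rw [h, Subgroup.mem_bot] at hgB
    have : g = 1 := Subtype.ext hgB
    rw [this, orderOf_one] at hg
    exact hp.ne_one hg.symm
  rcases eq_or_lt_of_le hBle with h | h
  · intro a ha
    rw [← h] at ha
    exact ha.2
  · exact absurd (hmin B hBnormal h) hBbot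

/-- Every nontrivial finite group has a minimal normal subgroup. -/
theorem aux_exists {G : Type*} [Group G] [Finite G] [Nontrivial G] :
    ∃ A : Subgroup G, IsMinimalNormal A := by
  have hS : {H : Subgroup G | H.Normal ∧ H ≠ ⊥}.Nonempty :=
    ⟨⊤, inferInstance, by simp⟩
  obtain ⟨A, ⟨hnorm, hbot⟩, hmin⟩ :=
    (wellFounded_lt (α := Subgroup G)).has_min _ hS
  refine ⟨A, hbot, hnorm, fun B hBn hBA => ?_⟩
  by_contra hBbot
  exact hmin B ⟨hBn, hBbot⟩ hBA

/-- A solvable subgroup `G` of the symmetric group of a finite set `Ω` with at least two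
elements, acting primitively on `Ω`, has exactly one minimal normal subgroup, and this
subgroup is an elementary abelian `p`-group for some prime `p`. -/
theorem solvable_primitive_unique_minimal_normal {Ω : Type*} [Fintype Ω]
    (h2 : 2 ≤ Fintype.card Ω)
    (G : Subgroup (Equiv.Perm Ω)) (hsolv : IsSolvable G)
    (hprim : IsPreprimitiveAction G Ω) :
    (∃! A : Subgroup G, IsMinimalNormal A) ∧
      ∀ A : Subgroup G, IsMinimalNormal A →
        ∃ p : ℕ, p.Prime ∧ (∀ a b : G, a ∈ A → b ∈ A → a * b = b * a) ∧
          ∀ a : G, a ∈ A → a ^ p = 1 := by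
  haveI : Group.IsSolvable G := hsolv
  -- G is nontrivial
  obtain ⟨x, y, hxy⟩ := Fintype.exists_pair_of_one_lt_card (by omega : 1 < Fintype.card Ω)
  obtain ⟨g, hg⟩ := hprim.1.exists_smul_eq x y
  have hg1 : g ≠ 1 := by
    intro h
    rw [h, one_smul] at hg
    exact hxy hg
  haveI : Nontrivial G := nontrivial_of_ne g 1 hg1
  -- uniqueness
  have huniq : ∀ A B : Subgroup G, IsMinimalNormal A → IsMinimalNormal B → A = B := by
    intro A B hA hB
    by_contra hne
    obtain ⟨hAbot, hAnorm, hAmin⟩ := hA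
    obtain ⟨hBbot, hBnorm, hBmin⟩ := hB
    haveI := hAnorm; haveI := hBnorm
    have hAcomm := aux_abelian (G := G) ⟨hAbot, hAnorm, hAmin⟩
    -- A ⊓ B = ⊥
    have hinf : A ⊓ B = ⊥ := by
      rcases eq_or_lt_of_le (inf_le_left : A ⊓ B ≤ A) with h | h
      · exfalso
        have hAB : A ≤ B := h ▸ inf_le_right
        rcases eq_or_lt_of_le hAB with h' | h'
        · exact hne h'
        · exact hAbot (hBmin A hAnorm h')
      · exact hAmin _ inferInstance h
    -- elements of A and B commute
    have hcommAB : ∀ a b : G, a ∈ A → b ∈ B → a * b = b * a := by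
      intro a b ha hb
      have h1 : ⁅a, b⁆ ∈ ⁅A, B⁆ := Subgroup.commutator_mem_commutator ha hb
      have h2 : ⁅A, B⁆ ≤ A ⊓ B := Subgroup.commutator_le_inf A B
      have := h2 h1
      rw [hinf, Subgroup.mem_bot] at this
      exact commutatorElement_eq_one_iff_mul_comm.mp this
    -- A and B act pretransitively
    have htransA := aux_trans G hprim A hAbot
    have htransB := aux_trans G hprim B hBbot
    obtain ⟨ω⟩ := Fintype.card_pos_iff.mp (by omega : 0 < Fintype.card Ω)
    -- every element of B lies in A
    have hBleA : ∀ b : G, b ∈ B → b ∈ A := by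
      intro b hb
      obtain ⟨a, haeq⟩ := htransA.exists_smul_eq ω (b • ω)
      have haeq' : (a : G) • ω = b • ω := haeq
      have hsmul : ∀ z : Ω, b • z = (a : G) • z := by
        intro z
        obtain ⟨a', ha'⟩ := htransA.exists_smul_eq ω z
        have ha'' : (a' : G) • ω = z := ha'
        calc b • z = b • ((a' : G) • ω) := by rw [ha'']
          _ = (b * (a' : G)) • ω := by rw [mul_smul]
          _ = ((a' : G) * b) • ω := by rw [hcommAB _ _ a'.2 hb]
          _ = (a' : G) • (b • ω) := by rw [mul_smul]
          _ = (a' : G) • ((a : G) • ω) := by rw [haeq']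
          _ = ((a' : G) * (a : G)) • ω := by rw [mul_smul]
          _ = ((a : G) * (a' : G)) • ω := by rw [hAcomm _ _ a.2 a'.2]
          _ = (a : G) • ((a' : G) • ω) := by rw [mul_smul]
          _ = (a : G) • z := by rw [ha'']
      have hba : b = (a : G) := by
        apply Subtype.ext
        exact Equiv.ext fun z => hsmul z
      rw [hba]
      exact a.2
    -- so B ≤ A ⊓ B = ⊥, contradiction
    apply hBbot
    rw [eq_bot_iff]
    intro b hb
    have : b ∈ A ⊓ B := ⟨hBleA b hb, hb⟩
    rw [hinf] at this
    exact this
  obtain ⟨A0, hA0⟩ := aux_exists (G := G)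
  refine ⟨⟨A0, hA0, fun B hB => huniq B A0 hB hA0⟩, ?_⟩
  intro A hA
  have hcomm := aux_abelian (G := G) hA
  obtain ⟨p, hp, hpow⟩ := aux_elem hA hcomm
  exact ⟨p, hp, hcomm, hpow⟩
end

section
/- Let Ω be a finite set with at least two elements, let G be a solvable subgroup of Sym(Ω) acting primitively on Ω, and let A be a minimal normal subgroup of G. Then A acts simply transitively (regularly) on Ω: for all x, y ∈ Ω there exists exactly one a ∈ A with a(x) = y. In particular, the cardinality of A equals the cardinality of Ω. -/
/-- If `G` is a solvable subgroup of the symmetric group of a finite set `Ω` with at least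
two elements, acting primitively on `Ω`, and `A` is a minimal normal subgroup of `G`, then
`A` acts simply transitively (regularly) on `Ω`; in particular `|A| = |Ω|`. -/
theorem minimal_normal_acts_regularly {Ω : Type*} [Fintype Ω]
    (h2 : 2 ≤ Fintype.card Ω)
    (G : Subgroup (Equiv.Perm Ω)) (hsolv : IsSolvable G)
    (hprim : IsPreprimitiveAction G Ω)
    (A : Subgroup G) (hA : IsMinimalNormal A) :
    (∀ x y : Ω, ∃! a : A, ((a : G) : Equiv.Perm Ω) x = y) ∧
      Nat.card A = Fintype.card Ω := by
  obtain ⟨hAbot, hAnorm, hAmin⟩ := hA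
  haveI := hAnorm
  -- A is abelian: ⁅A,A⁆ is normal and ≤ A; can't equal A by solvability
  have hsolv_imp : ⁅A, A⁆ = A → A = ⊥ := by
    intro h
    obtain ⟨n, hn⟩ := hsolv.solvable
    have key : ∀ m, A ≤ derivedSeries G m := by
      intro m
      induction m with
      | zero => exact le_top
      | succ m ih => rw [derivedSeries_succ, ← h]; exact Subgroup.commutator_mono ih ih
    exact le_bot_iff.mp (hn ▸ key n)
  have hcomm : ⁅A, A⁆ = ⊥ := by
    rcases lt_or_eq_of_le (Subgroup.commutator_le_left A A) with hlt | heq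
    · exact hAmin _ (Subgroup.commutator_normal A A) hlt
    · exact absurd (hsolv_imp heq) hAbot
  have habel : ∀ a b : G, a ∈ A → b ∈ A → a * b = b * a := by
    rw [Subgroup.commutator_eq_bot_iff_le_centralizer] at hcomm
    intro a b ha hb
    exact hcomm hb a ha
  -- A is not the trivial action
  have hnontriv : ∃ (a : A) (x : Ω), ((a : G) : Equiv.Perm Ω) x ≠ x := by
    by_contra h
    push_neg at h
    apply hAbot
    ext g
    simp only [Subgroup.mem_bot]
    constructor
    · intro hg
      have : ((g : G) : Equiv.Perm Ω) = 1 := by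
        ext x; exact h ⟨g, hg⟩ x
      have : (g : G) = 1 := Subtype.ext this
      exact this
    · rintro rfl; exact A.one_mem
  -- orbits of A are blocks, hence trivial; nontriviality forces transitivity of A
  have htransA : ∀ x y : Ω, ∃ a : A, ((a : G) : Equiv.Perm Ω) x = y := by
    obtain ⟨a₀, x₀, ha₀⟩ := hnontriv
    have horb : ∀ x : Ω, MulAction.orbit A x = Set.univ ∨ (MulAction.orbit A x).Subsingleton := by
      intro x
      rcases hprim.2 _ (MulAction.IsBlock.orbit_of_normal (N := A) x) with h | h
      · exact Or.inr h
      · exact Or.inl h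
    rcases horb x₀ with h | h
    · -- orbit x₀ = univ; then for any x, orbit x also univ (orbits partition)
      intro x y
      have hx : x ∈ MulAction.orbit A x₀ := h ▸ Set.mem_univ x
      have hy : y ∈ MulAction.orbit A x₀ := h ▸ Set.mem_univ y
      obtain ⟨a, rfl⟩ := hx
      obtain ⟨b, rfl⟩ := hy
      refine ⟨b * a⁻¹, ?_⟩
      show (b * a⁻¹ : A) • ((a : A) • x₀) = (b : A) • x₀
      rw [mul_smul, inv_smul_smul]
    · exfalso
      apply ha₀
      have h1 : (a₀ : A) • x₀ ∈ MulAction.orbit A x₀ := MulAction.mem_orbit _ _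
      have h2 : x₀ ∈ MulAction.orbit A x₀ := MulAction.mem_orbit_self _
      exact h h1 h2
  -- freeness
  have hfree : ∀ (a : A) (x : Ω), ((a : G) : Equiv.Perm Ω) x = x → a = 1 := by
    intro a x hax
    have hid : ∀ y : Ω, ((a : G) : Equiv.Perm Ω) y = y := by
      intro y
      obtain ⟨b, rfl⟩ := htransA x y
      have hc := habel (a : G) (b : G) a.2 b.2
      calc ((a : G) : Equiv.Perm Ω) (((b : G) : Equiv.Perm Ω) x)
          = (((a : G) * (b : G) : G) : Equiv.Perm Ω) x := rfl
        _ = (((b : G) * (a : G) : G) : Equiv.Perm Ω) x := by rw [hc]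
        _ = ((b : G) : Equiv.Perm Ω) (((a : G) : Equiv.Perm Ω) x) := rfl
        _ = ((b : G) : Equiv.Perm Ω) x := by rw [hax]
    have : ((a : G) : Equiv.Perm Ω) = 1 := Equiv.ext hid
    exact Subtype.ext (Subtype.ext this)
  have hreg : ∀ x y : Ω, ∃! a : A, ((a : G) : Equiv.Perm Ω) x = y := by
    intro x y
    obtain ⟨a, ha⟩ := htransA x y
    refine ⟨a, ha, fun b hb => ?_⟩
    have ha' : a • x = y := ha
    have hb' : b • x = y := hb
    have h1 : (a⁻¹ * b : A) • x = x := by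
      rw [mul_smul, hb', ← ha', inv_smul_smul]
    have h1' : (((a⁻¹ * b : A) : G) : Equiv.Perm Ω) x = x := h1
    have h2 := hfree _ _ h1'
    exact (inv_mul_eq_one.mp h2).symm
  refine ⟨hreg, ?_⟩
  -- cardinality
  obtain ⟨x₀⟩ : Nonempty Ω := Fintype.card_pos_iff.mp (by omega)
  have hbij : Function.Bijective (fun a : A => ((a : G) : Equiv.Perm Ω) x₀) := by
    constructor
    · intro a b hab
      obtain ⟨c, hc, hcu⟩ := hreg x₀ (((a : G) : Equiv.Perm Ω) x₀)
      rw [hcu a rfl, hcu b hab.symm]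
    · intro y
      obtain ⟨a, ha⟩ := htransA x₀ y
      exact ⟨a, ha⟩
  rw [← Nat.card_eq_fintype_card]
  exact Nat.card_eq_of_bijective _ hbij
end

section
/- Let Ω be a finite set with at least two elements, let G be a solvable subgroup of Sym(Ω) acting primitively on Ω, let A be a minimal normal subgroup of G, and fix x ∈ Ω. Let G_x = {g ∈ G : g(x) = x} be the stabilizer of x in G. Then G is the (internal) semidirect product of A and G_x: A ∩ G_x is trivial and every element g ∈ G can be written as g = a·h with a ∈ A and h ∈ G_x (i.e., G_x is a complement of A in G). -/
/-- If `G` is a solvable subgroup of the symmetric group of a finite set `Ω` with at least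
two elements, acting primitively on `Ω`, `A` is a minimal normal subgroup of `G`, and
`x ∈ Ω`, then `G` is the internal semidirect product of `A` and the stabilizer `G_x`:
`A ∩ G_x` is trivial and every `g ∈ G` can be written as `g = a * h` with `a ∈ A`,
`h ∈ G_x`. -/
theorem stabilizer_is_complement_of_minimal_normal {Ω : Type*} [Fintype Ω]
    (h2 : 2 ≤ Fintype.card Ω)
    (G : Subgroup (Equiv.Perm Ω)) (hsolv : IsSolvable G)
    (hprim : IsPreprimitiveAction G Ω)
    (A : Subgroup G) (hA : IsMinimalNormal A) (x : Ω) :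
    A ⊓ MulAction.stabilizer G x = ⊥ ∧
      ∀ g : G, ∃ a ∈ A, ∃ h ∈ MulAction.stabilizer G x, g = a * h := by
  obtain ⟨hAne, hAnorm, hAmin⟩ := hA
  haveI := hAnorm
  -- faithfulness of the action of G on Ω
  have hfaith : ∀ a : G, (∀ y : Ω, a • y = y) → a = 1 := by
    intro a ha
    ext y
    exact ha y
  -- A is abelian
  have habel : ∀ a b : G, a ∈ A → b ∈ A → a * b = b * a := by
    rcases lt_or_eq_of_le (Subgroup.commutator_le_left A A) with h | h
    · have hbot : ⁅A, A⁆ = ⊥ := hAmin _ inferInstance h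
      intro a b ha hb
      open scoped commutatorElement in
      have : ⁅a, b⁆ ∈ (⁅A, A⁆ : Subgroup G) :=
        Subgroup.commutator_mem_commutator ha hb
      rw [hbot, Subgroup.mem_bot] at this
      exact commutatorElement_eq_one_iff_mul_comm.mp this
    · exfalso
      have hle : ∀ n, A ≤ derivedSeries G n := by
        intro n
        induction n with
        | zero => exact le_top
        | succ n ih =>
          rw [derivedSeries_succ]
          calc A = ⁅A, A⁆ := h.symm
            _ ≤ _ := Subgroup.commutator_mono ih ih
      obtain ⟨⟨n, hn⟩⟩ := hsolv
      exact hAne (le_bot_iff.mp (hn ▸ hle n))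
  -- the orbit of A is a block, hence trivial
  have hblock := MulAction.IsBlock.orbit_of_normal (G := G) (N := A) (X := Ω) x
  rcases hprim.2 _ hblock with hsub | huniv
  · -- A fixes every point, contradiction with A ≠ ⊥
    exfalso
    apply hAne
    rw [eq_bot_iff]
    intro a ha
    rw [Subgroup.mem_bot]
    apply hfaith
    intro y
    obtain ⟨g, hg⟩ := hprim.1.exists_smul_eq x y
    have hc : g⁻¹ * a * g ∈ A := by
      have := hAnorm.conj_mem a ha g⁻¹
      simpa using this
    have hx1 : (⟨g⁻¹ * a * g, hc⟩ : A) • x ∈ MulAction.orbit A x :=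
      MulAction.mem_orbit _ _
    have hx2 : x ∈ MulAction.orbit A x := MulAction.mem_orbit_self x
    have hfix : (g⁻¹ * a * g) • x = x := hsub hx1 hx2
    calc a • y = a • (g • x) := by rw [hg]
      _ = g • ((g⁻¹ * a * g) • x) := by simp [smul_smul, mul_assoc]
      _ = g • x := by rw [hfix]
      _ = y := hg
  · -- A is transitive
    have htrans : ∀ y : Ω, ∃ a : G, a ∈ A ∧ a • x = y := by
      intro y
      have : y ∈ MulAction.orbit A x := by rw [huniv]; trivial
      obtain ⟨a, ha⟩ := this
      exact ⟨(a : G), a.2, ha⟩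
    constructor
    · rw [eq_bot_iff]
      rintro a ⟨haA, haS⟩
      rw [Subgroup.mem_bot]
      have haS' : a • x = x := haS
      apply hfaith
      intro y
      obtain ⟨b, hbA, hb⟩ := htrans y
      calc a • y = a • (b • x) := by rw [hb]
        _ = (a * b) • x := (smul_smul _ _ _)
        _ = (b * a) • x := by rw [habel a b haA hbA]
        _ = b • (a • x) := (smul_smul _ _ _).symm
        _ = b • x := by rw [haS']
        _ = y := hb
    · intro g
      obtain ⟨a, haA, ha⟩ := htrans (g • x)
      refine ⟨a, haA, a⁻¹ * g, ?_, by group⟩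
      show (a⁻¹ * g) • x = x
      rw [mul_smul, ← ha]
      exact inv_smul_smul a x
end

section
/- Let Ω be a finite set with at least two elements, let G be a solvable subgroup of Sym(Ω) acting primitively on Ω, and suppose |Ω| = p^k with p prime and k ≥ 1. Then there exists a bijection e : Ω ≃ (ZMod p)^k such that every g ∈ G acts affinely through e: for each g ∈ G there exist an invertible linear map L_g : (ZMod p)^k → (ZMod p)^k and a vector b_g ∈ (ZMod p)^k with e(g(x)) = L_g(e(x)) + b_g for all x ∈ Ω. -/
lemma aux_normal_transitive {Ω : Type*} [Fintype Ω] {G : Subgroup (Equiv.Perm Ω)}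
    (hprim : IsPreprimitiveAction G Ω) (N : Subgroup G) [N.Normal] (hne : N ≠ ⊥) :
    ∀ x y : Ω, ∃ a : N, ((a : G) : Equiv.Perm Ω) x = y := by
  obtain ⟨⟨a0, ha0N⟩, ha0⟩ := (Subgroup.ne_bot_iff_exists_ne_one.mp hne)
  have ha0' : ((a0 : G) : Equiv.Perm Ω) ≠ 1 := by
    simp only [ne_eq, Subtype.ext_iff] at ha0 ⊢
    simpa using ha0
  obtain ⟨x0, hx0⟩ : ∃ x0 : Ω, ((a0 : G) : Equiv.Perm Ω) x0 ≠ x0 := by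
    by_contra h
    push_neg at h
    exact ha0' (Equiv.ext h)
  have horb : MulAction.IsTrivialBlock (MulAction.orbit N x0) :=
    hprim.2 _ (MulAction.IsBlock.orbit_of_normal x0)
  have horb' : MulAction.orbit N x0 = Set.univ := by
    rcases horb with h | h
    · exfalso
      apply hx0
      have h1 : (⟨a0, ha0N⟩ : N) • x0 ∈ MulAction.orbit N x0 := MulAction.mem_orbit _ _
      have h2 : x0 ∈ MulAction.orbit N x0 := MulAction.mem_orbit_self _
      exact h h1 h2
    · exact h
  intro x y
  have hx : x ∈ MulAction.orbit N x0 := horb' ▸ Set.mem_univ x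
  have hy : y ∈ MulAction.orbit N x0 := horb' ▸ Set.mem_univ y
  obtain ⟨b, hb⟩ := hx
  obtain ⟨c, hc⟩ := hy
  refine ⟨c * b⁻¹, ?_⟩
  have : (c * b⁻¹) • x = y := by
    rw [← hb, ← hc, smul_smul]
    simp [mul_assoc]
  exact this

lemma aux_regular {Ω : Type*} [Fintype Ω] {G : Subgroup (Equiv.Perm Ω)}
    (hprim : IsPreprimitiveAction G Ω) (N : Subgroup G) [N.Normal] (hne : N ≠ ⊥)
    (hcomm : ∀ a b : N, a * b = b * a) (x0 : Ω) :
    Function.Bijective (fun a : N => ((a : G) : Equiv.Perm Ω) x0) := by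
  have htrans := aux_normal_transitive hprim N hne
  have hfree : ∀ (a : N) (y : Ω), ((a : G) : Equiv.Perm Ω) y = y → a = 1 := by
    intro a y hy
    have hall : ∀ z : Ω, ((a : G) : Equiv.Perm Ω) z = z := by
      intro z
      obtain ⟨d, hd⟩ := htrans y z
      have h1 : ((a * d : N) : Equiv.Perm Ω) y = ((d * a : N) : Equiv.Perm Ω) y := by
        rw [hcomm]
      simp only [Subgroup.coe_mul, Equiv.Perm.mul_apply] at h1
      rw [hy] at h1
      rw [← hd]
      exact h1
    have h2 : ((a : G) : Equiv.Perm Ω) = 1 := Equiv.ext hall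
    have h3 : (a : G) = 1 := Subtype.ext h2
    exact Subtype.ext h3
  constructor
  · intro a b hab
    simp only at hab
    have : ((b⁻¹ * a : N) : Equiv.Perm Ω) x0 = x0 := by
      simp only [Subgroup.coe_mul, Equiv.Perm.mul_apply, hab]
      simp [← Equiv.Perm.mul_apply]
    have h1 := hfree _ _ this
    rw [mul_eq_one_iff_eq_inv] at h1
    simpa using h1.symm
  · intro y
    obtain ⟨a, ha⟩ := htrans x0 y
    exact ⟨a, ha⟩

open scoped commutatorElement

set_option maxHeartbeats 1000000 in
set_option synthInstance.maxHeartbeats 200000 in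
/-- If `G` is a solvable subgroup of the symmetric group of a finite set `Ω` with at least
two elements, acting primitively on `Ω`, and `|Ω| = p ^ k` with `p` prime and `k ≥ 1`, then
there is a bijection `e : Ω ≃ (ZMod p)^k` through which every `g ∈ G` acts as an affinity
`v ↦ L v + b` with `L` an invertible linear map. -/
theorem solvable_primitive_acts_affinely {Ω : Type*} [Fintype Ω]
    (h2 : 2 ≤ Fintype.card Ω)
    (G : Subgroup (Equiv.Perm Ω)) (hsolv : IsSolvable G)
    (hprim : IsPreprimitiveAction G Ω)
    (p k : ℕ) (hp : p.Prime) (hk : 1 ≤ k) (hcard : Fintype.card Ω = p ^ k) :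
    ∃ e : Ω ≃ (Fin k → ZMod p), ∀ g : G,
      ∃ (L : (Fin k → ZMod p) ≃ₗ[ZMod p] (Fin k → ZMod p)) (b : Fin k → ZMod p),
        ∀ x : Ω, e ((g : Equiv.Perm Ω) x) = L (e x) + b := by
  classical
  haveI : Fact p.Prime := ⟨hp⟩
  have hΩ : Nonempty Ω := Fintype.card_pos_iff.mp (by omega)
  obtain ⟨x1, y1, hxy⟩ := Fintype.exists_pair_of_one_lt_card (by omega : 1 < Fintype.card Ω)
  haveI hpt := hprim.1
  obtain ⟨g0, hg0⟩ := MulAction.exists_smul_eq G x1 y1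
  have hGnontriv : (⊤ : Subgroup G) ≠ ⊥ := by
    intro h
    have hg01 : g0 = 1 := Subgroup.mem_bot.mp (h ▸ Subgroup.mem_top g0)
    rw [hg01, one_smul] at hg0
    exact hxy hg0
  -- derived series
  obtain hex := hsolv.solvable
  have hn0 : derivedSeries G (Nat.find hex) = ⊥ := Nat.find_spec hex
  have hn0pos : 0 < Nat.find hex := by
    rcases Nat.eq_zero_or_pos (Nat.find hex) with h | h
    · exact absurd (by rw [h] at hn0; simpa using hn0) hGnontriv
    · exact h
  set A := derivedSeries G (Nat.find hex - 1) with hAdef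
  have hAne : A ≠ ⊥ := Nat.find_min hex (by omega)
  haveI hAnorm : A.Normal := derivedSeries_normal _ _
  have hAAbot : ⁅A, A⁆ = ⊥ := by
    have : derivedSeries G (Nat.find hex - 1 + 1) = ⊥ := by
      rw [show Nat.find hex - 1 + 1 = Nat.find hex by omega]; exact hn0
    rwa [derivedSeries_succ] at this
  have hAcomm' : ∀ a b : G, a ∈ A → b ∈ A → a * b = b * a := by
    intro a b ha hb
    have h1 : ⁅a, b⁆ ∈ (⁅A, A⁆ : Subgroup G) := Subgroup.commutator_mem_commutator ha hb
    rw [hAAbot, Subgroup.mem_bot] at h1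
    exact commutatorElement_eq_one_iff_mul_comm.mp h1
  have hAcomm : ∀ a b : A, a * b = b * a := fun a b =>
    Subtype.ext (hAcomm' a b a.2 b.2)
  -- the subgroup of elements of A of order dividing p
  obtain ⟨x0⟩ := hΩ
  have hAbij := aux_regular hprim A hAne hAcomm x0
  let fA : A ≃ Ω := Equiv.ofBijective _ hAbij
  haveI : Fintype A := Fintype.ofEquiv Ω fA.symm
  have hcardA : Fintype.card A = p ^ k := by
    rw [← hcard]; exact Fintype.card_congr fA
  obtain ⟨a1, ha1⟩ := exists_prime_orderOf_dvd_card (G := A) p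
    (by rw [hcardA]; exact dvd_pow_self p (by omega))
  let P : Subgroup G :=
    { carrier := {g : G | g ∈ A ∧ g ^ p = 1}
      one_mem' := ⟨A.one_mem, one_pow p⟩
      mul_mem' := fun {a b} ha hb => ⟨A.mul_mem ha.1 hb.1, by
        rw [Commute.mul_pow (hAcomm' a b ha.1 hb.1), ha.2, hb.2, one_mul]⟩
      inv_mem' := fun {a} ha => ⟨A.inv_mem ha.1, by rw [inv_pow, ha.2, inv_one]⟩ }
  have hPmem : ∀ {g : G}, g ∈ P ↔ g ∈ A ∧ g ^ p = 1 := Iff.rfl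
  haveI hPnormal : P.Normal := by
    constructor
    intro a ha g
    exact ⟨hAnorm.conj_mem a ha.1 g, by rw [conj_pow, ha.2]; group⟩
  have hPne : P ≠ ⊥ := by
    rw [Subgroup.ne_bot_iff_exists_ne_one]
    have hpow : (a1 : G) ^ p = 1 := by
      have h := pow_orderOf_eq_one a1
      rw [ha1] at h
      exact_mod_cast congrArg Subtype.val h
    refine ⟨⟨(a1 : G), ⟨a1.2, hpow⟩⟩, ?_⟩
    intro h
    have h1 : (a1 : G) = 1 := by simpa using Subtype.ext_iff.mp h
    have h2 : a1 = 1 := Subtype.ext h1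
    rw [h2, orderOf_one] at ha1
    exact hp.one_lt.ne ha1
  have hPcomm : ∀ a b : P, a * b = b * a := fun a b =>
    Subtype.ext (hAcomm' a b a.2.1 b.2.1)
  have hPbij := aux_regular hprim P hPne hPcomm x0
  let f : P ≃ Ω := Equiv.ofBijective _ hPbij
  -- vector space structure on Additive P
  letI iC : CommGroup P := { (inferInstance : Group P) with mul_comm := hPcomm }
  letI iA : AddCommGroup (Additive P) := Additive.addCommGroup
  letI iM : Module (ZMod p) (Additive P) := AddCommGroup.zmodModule (by
    intro x
    have hx : ((Additive.toMul x : P) : G) ^ p = 1 := (Additive.toMul x).2.2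
    apply Additive.toMul.injective
    rw [toMul_nsmul, toMul_zero]
    apply Subtype.ext
    push_cast
    exact hx)
  haveI : Fintype (Additive P) := Fintype.ofEquiv Ω (f.symm.trans Additive.ofMul)
  have hcardP : Fintype.card (Additive P) = p ^ k := by
    rw [← hcard]
    exact Fintype.card_congr (Additive.ofMul.symm.trans f)
  haveI iF : Module.Finite (ZMod p) (Additive P) := Module.Finite.of_finite (R := ZMod p)
  haveI iFr : Module.Free (ZMod p) (Additive P) := Module.Free.of_divisionRing _ _
  have hfr : Module.finrank (ZMod p) (Additive P) = k := by
    have h1 := Module.card_eq_pow_finrank (K := ZMod p) (V := Additive P)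
    rw [ZMod.card, hcardP] at h1
    exact (Nat.pow_right_injective hp.two_le h1.symm)
  let ε : Additive P ≃ₗ[ZMod p] (Fin k → ZMod p) :=
    @LinearEquiv.ofFinrankEq (ZMod p) (Additive P) (Fin k → ZMod p) _ iA.toAddCommMonoid iM iFr _ _ _ _ iF _
      (by rw [hfr, Module.finrank_fin_fun])
  refine ⟨(f.symm.trans Additive.ofMul).trans ε.toEquiv, ?_⟩
  intro g
  let φ : P ≃* P := MulAut.conjNormal (g : G)
  let φ' : Additive P ≃+ Additive P := MulEquiv.toAdditive φ
  let L' : Additive P ≃ₗ[ZMod p] Additive P :=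
    { φ' with map_smul' := (φ'.toAddMonoidHom.toZModLinearMap p).map_smul' }
  refine ⟨(ε.symm.trans L').trans ε, ε.toEquiv (Additive.ofMul (f.symm ((g : Equiv.Perm Ω) x0))), ?_⟩
  intro x
  set a := f.symm x with hadef
  set b' := f.symm ((g : Equiv.Perm Ω) x0) with hbdef
  have hx : ((a : G) : Equiv.Perm Ω) x0 = x := f.apply_symm_apply x
  have hb : ((b' : G) : Equiv.Perm Ω) x0 = (g : Equiv.Perm Ω) x0 := f.apply_symm_apply _
  have hφa : ((φ a : P) : G) = (g : G) * (a : G) * (g : G)⁻¹ := MulAut.conjNormal_apply _ _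
  have key : (g : Equiv.Perm Ω) x = ((((φ a * b' : P) : G)) : Equiv.Perm Ω) x0 := by
    rw [Subgroup.coe_mul, Subgroup.coe_mul, Equiv.Perm.mul_apply, hb, hφa]
    simp only [Subgroup.coe_mul, Subgroup.coe_inv, Equiv.Perm.mul_apply, Equiv.Perm.coe_inv, Equiv.symm_apply_apply]
    rw [hx]
  have key2 : f.symm ((g : Equiv.Perm Ω) x) = φ a * b' := by
    rw [key]
    exact f.symm_apply_apply (φ a * b')
  simp only [Equiv.trans_apply, key2, LinearEquiv.coe_toEquiv, LinearEquiv.trans_apply]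
  rw [ofMul_mul]
  rw [ε.map_add]
  congr 1
  rw [LinearEquiv.symm_apply_apply]
  rfl
end

section
/- Let Ω be a finite set with |Ω| = p^k for a prime p and integer k ≥ 1, and let G be a solvable subgroup of Sym(Ω) acting primitively on Ω. Then every element g ∈ G with g ≠ 1 has at most p^{k-1} fixed points in Ω. -/
/-- If `G` is a solvable subgroup of the symmetric group of a finite set `Ω` with
`|Ω| = p ^ k` (`p` prime, `k ≥ 1`), acting primitively on `Ω`, then every `g ∈ G` with
`g ≠ 1` has at most `p ^ (k - 1)` fixed points in `Ω`. -/
theorem fixed_points_le_of_solvable_primitive {Ω : Type*} [Fintype Ω]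
    (p k : ℕ) (hp : p.Prime) (hk : 1 ≤ k) (hcard : Fintype.card Ω = p ^ k)
    (G : Subgroup (Equiv.Perm Ω)) (hsolv : IsSolvable G)
    (hprim : IsPreprimitiveAction G Ω)
    (g : Equiv.Perm Ω) (hg : g ∈ G) (hne : g ≠ 1) :
    Nat.card {x : Ω // g x = x} ≤ p ^ (k - 1) := by
  classical
  -- Ω has at least 2 elements
  have hcard2 : 2 ≤ Fintype.card Ω := by
    rw [hcard]
    calc 2 ≤ p := hp.two_le
    _ = p ^ 1 := (pow_one p).symm
    _ ≤ p ^ k := Nat.pow_le_pow_right hp.pos hk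
  -- G is nontrivial
  have hGnt : (⊤ : Subgroup G) ≠ ⊥ := by
    intro h
    have hall : ∀ x y : Ω, x = y := by
      intro x y
      obtain ⟨a, ha⟩ := hprim.1.exists_smul_eq x y
      have ha1 : a = 1 := by
        have : a ∈ (⊥ : Subgroup G) := h ▸ Subgroup.mem_top a
        simpa using this
      subst ha1; simpa using ha
    have : Fintype.card Ω ≤ 1 := Fintype.card_le_one_iff.mpr hall
    omega
  -- the last nontrivial term of the derived series
  obtain ⟨n0, hn0⟩ := hsolv.solvable
  have hex : ∃ n, derivedSeries G n = ⊥ := ⟨n0, hn0⟩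
  set m := Nat.find hex with hm_def
  have hm : derivedSeries G m = ⊥ := Nat.find_spec hex
  have hm0 : m ≠ 0 := by
    intro h
    rw [h, derivedSeries_zero] at hm
    exact hGnt hm
  set N : Subgroup G := derivedSeries G (m - 1) with hN_def
  haveI hNnormal : N.Normal := derivedSeries_normal G (m - 1)
  have hNne : N ≠ ⊥ := Nat.find_min hex (by omega)
  have hNcommutator : ⁅N, N⁆ = ⊥ := by
    have hmm : m - 1 + 1 = m := by omega
    have h1 : derivedSeries G ((m - 1) + 1) = ⊥ := by rw [hmm]; exact hm
    rwa [derivedSeries_succ] at h1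
  -- N is commutative
  have hcomm : ∀ a ∈ N, ∀ b ∈ N, a * b = b * a := by
    intro a ha b hb
    open commutatorElement in have h1 : ⁅a, b⁆ ∈ (⊥ : Subgroup G) :=
      hNcommutator ▸ Subgroup.commutator_mem_commutator ha hb
    rw [Subgroup.mem_bot] at h1
    exact commutatorElement_eq_one_iff_mul_comm.mp h1
  -- a nontrivial element of N
  obtain ⟨n1, hn1N, hn1ne⟩ : ∃ n1 : G, n1 ∈ N ∧ n1 ≠ 1 := by
    by_contra h
    push_neg at h
    exact hNne (Subgroup.eq_bot_iff_forall N |>.mpr h)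
  -- a point moved by n1
  obtain ⟨x1, hx1⟩ : ∃ x : Ω, (n1 : Equiv.Perm Ω) x ≠ x := by
    by_contra h
    push_neg at h
    exact hn1ne (Subtype.ext (Equiv.ext h))
  -- N acts transitively
  have htrans : ∀ x y : Ω, ∃ n : G, n ∈ N ∧ (n : Equiv.Perm Ω) x = y := by
    have horb : MulAction.orbit N x1 = Set.univ := by
      have hblock := MulAction.IsBlock.orbit_of_normal (G := G) (N := N) x1
      rcases hprim.2 _ hblock with h | h
      · exfalso
        apply hx1
        have h1 : x1 ∈ MulAction.orbit N x1 := MulAction.mem_orbit_self x1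
        have h2 : (n1 : Equiv.Perm Ω) x1 ∈ MulAction.orbit N x1 :=
          ⟨⟨n1, hn1N⟩, rfl⟩
        exact h h2 h1
      · exact h
    intro x y
    have hx : x ∈ MulAction.orbit N x1 := horb ▸ Set.mem_univ x
    have hy : y ∈ MulAction.orbit N x1 := horb ▸ Set.mem_univ y
    obtain ⟨a, ha⟩ := hx
    obtain ⟨b, hb⟩ := hy
    have ha' : (a : G) • x1 = x := ha
    have hb' : (b : G) • x1 = y := hb
    refine ⟨(b : G) * (a : G)⁻¹, N.mul_mem b.2 (N.inv_mem a.2), ?_⟩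
    have h3 : ((b : G) * (a : G)⁻¹) • x = y := by
      rw [← ha', mul_smul, inv_smul_smul, hb']
    exact h3
  -- N acts freely
  have hfree : ∀ n : G, n ∈ N → ∀ x : Ω, (n : Equiv.Perm Ω) x = x → n = 1 := by
    intro n hn x hx
    refine Subtype.ext (Equiv.ext fun y => ?_)
    obtain ⟨m', hm', hmx⟩ := htrans x y
    have hc : (n : G) * m' = m' * n := hcomm n hn m' hm'
    calc (n : Equiv.Perm Ω) y = ((n : Equiv.Perm Ω) * (m' : Equiv.Perm Ω)) x := by
          rw [← hmx]; rfl
    _ = ((m' : Equiv.Perm Ω) * (n : Equiv.Perm Ω)) x := by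
          rw [← Subgroup.coe_mul, ← Subgroup.coe_mul, hc]
    _ = (m' : Equiv.Perm Ω) x := by
          simp only [Equiv.Perm.mul_apply]; rw [hx]
    _ = y := hmx
  -- fixed points: empty case
  rcases isEmpty_or_nonempty {x : Ω // g x = x} with hE | hNE
  · simp [Nat.card_of_isEmpty]
  obtain ⟨⟨x0, hx0⟩⟩ := hNE
  set gG : G := ⟨g, hg⟩ with hgG_def
  -- cardinality of N
  have hcardN : Nat.card N = p ^ k := by
    have e : N ≃ Ω := by
      refine Equiv.ofBijective (fun n => ((n : G) : Equiv.Perm Ω) x0) ⟨?_, ?_⟩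
      · intro a b hab
        have h1 : (((b : G)⁻¹ * (a : G) : G) : Equiv.Perm Ω) x0 = x0 := by
          simp only [Subgroup.coe_mul, Subgroup.coe_inv, Equiv.Perm.mul_apply, hab]
          simp
        have h2 := hfree _ (N.mul_mem (N.inv_mem b.2) a.2) x0 h1
        have h3 : (b : G) = (a : G) := inv_mul_eq_one.mp h2
        exact Subtype.ext h3.symm
      · intro y
        obtain ⟨n, hn, hny⟩ := htrans x0 y
        exact ⟨⟨n, hn⟩, hny⟩
    rw [Nat.card_congr e, Nat.card_eq_fintype_card, hcard]
  -- the centralizer subgroup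
  set C : Subgroup G := N ⊓ Subgroup.centralizer {gG} with hC_def
  have hCle : C ≤ N := inf_le_left
  -- the fixed points are in bijection with C
  have hbij : Nat.card {x : Ω // g x = x} = Nat.card C := by
    apply Nat.card_congr
    symm
    refine Equiv.ofBijective (fun c => ⟨(((c : G)) : Equiv.Perm Ω) x0, ?_⟩) ⟨?_, ?_⟩
    · -- g fixes c • x0
      obtain ⟨c, hcN, hcC⟩ := c
      have hc : gG * c = c * gG :=
        Subgroup.mem_centralizer_iff.mp hcC gG rfl
      calc g ((c : Equiv.Perm Ω) x0)
          = ((gG : Equiv.Perm Ω) * (c : Equiv.Perm Ω)) x0 := rfl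
      _ = ((c : Equiv.Perm Ω) * (gG : Equiv.Perm Ω)) x0 := by
          rw [← Subgroup.coe_mul, ← Subgroup.coe_mul, hc]
      _ = (c : Equiv.Perm Ω) x0 := by
          simp only [Equiv.Perm.mul_apply]
          rw [show (gG : Equiv.Perm Ω) x0 = x0 from hx0]
    · intro a b hab
      have hab' : ((a : G) : Equiv.Perm Ω) x0 = ((b : G) : Equiv.Perm Ω) x0 :=
        congrArg Subtype.val hab
      have h1 : (((b : G)⁻¹ * (a : G) : G) : Equiv.Perm Ω) x0 = x0 := by
        simp only [Subgroup.coe_mul, Subgroup.coe_inv, Equiv.Perm.mul_apply, hab']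
        simp
      have h2 := hfree _ (N.mul_mem (N.inv_mem (hCle b.2)) (hCle a.2)) x0 h1
      have h3 : (b : G) = (a : G) := inv_mul_eq_one.mp h2
      exact Subtype.ext h3.symm
    · rintro ⟨y, hy⟩
      obtain ⟨n, hn, hny⟩ := htrans x0 y
      -- show n centralizes gG
      have hginvx0 : g⁻¹ x0 = x0 := by
        conv_lhs => rw [← hx0]
        exact g.symm_apply_apply x0
      have hw : gG * n * gG⁻¹ ∈ N := hNnormal.conj_mem n hn gG
      have hfix : ((n⁻¹ * (gG * n * gG⁻¹) : G) : Equiv.Perm Ω) x0 = x0 := by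
        simp only [Subgroup.coe_mul, Subgroup.coe_inv, Equiv.Perm.mul_apply]
        have : ((gG : Equiv.Perm Ω))⁻¹ x0 = x0 := hginvx0
        rw [this, hny, show (gG : Equiv.Perm Ω) y = y from hy, ← hny]
        exact (n : Equiv.Perm Ω).symm_apply_apply x0
      have h2 := hfree _ (N.mul_mem (N.inv_mem hn) hw) x0 hfix
      have h3 : gG * n * gG⁻¹ = n := by
        have := inv_mul_eq_one.mp h2
        exact this.symm
      have hcent : n ∈ Subgroup.centralizer {gG} := by
        rw [Subgroup.mem_centralizer_iff]
        rintro z rfl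
        have h4 : gG * n * gG⁻¹ * gG = n * gG := by rw [h3]
        simpa [mul_assoc] using h4
      exact ⟨⟨n, hn, hcent⟩, Subtype.ext hny⟩
  -- C is a proper subgroup of N
  have hCne : C ≠ N := by
    intro h
    apply hne
    refine Equiv.ext fun y => ?_
    obtain ⟨n, hn, hny⟩ := htrans x0 y
    have hnC : n ∈ C := h ▸ hn
    have hc : gG * n = n * gG :=
      Subgroup.mem_centralizer_iff.mp hnC.2 gG rfl
    calc g y = ((gG : Equiv.Perm Ω) * (n : Equiv.Perm Ω)) x0 := by rw [← hny]; rfl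
    _ = ((n : Equiv.Perm Ω) * (gG : Equiv.Perm Ω)) x0 := by
        rw [← Subgroup.coe_mul, ← Subgroup.coe_mul, hc]
    _ = (n : Equiv.Perm Ω) x0 := by
        simp only [Equiv.Perm.mul_apply]
        rw [show (gG : Equiv.Perm Ω) x0 = x0 from hx0]
    _ = y := hny
  -- conclude by Lagrange
  have hdvd : Nat.card C ∣ p ^ k := hcardN ▸ Subgroup.card_dvd_of_le hCle
  obtain ⟨i, hik, hCc⟩ := (Nat.dvd_prime_pow hp).mp hdvd
  have hikne : i ≠ k := by
    intro h
    subst h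
    apply hCne
    apply Subgroup.eq_of_le_of_card_ge hCle
    rw [hcardN, hCc]
  rw [hbij, hCc]
  exact Nat.pow_le_pow_right hp.pos (by omega)
end

section
/- (Zariski) Let Ω be a finite set with |Ω| = p^k for a prime p and integer k ≥ 1, and let G be a solvable subgroup of Sym(Ω) acting primitively on Ω. For g ∈ G with g ≠ 1, let r(g) denote the number of orbits of the cyclic subgroup generated by g on Ω (the number of cycles of g, counting fixed points as cycles of length 1), and set b(g) = |Ω| − r(g). Then 2·b(g) ≥ p^k − p^{k-1}. -/
open MulAction in
lemma two_mul_card_quot_le (α H : Type*) [Fintype α] [Group H] [MulAction H α] :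
    2 * Nat.card (orbitRel.Quotient H α) ≤
      Fintype.card α + Nat.card (fixedPoints H α) := by
  classical
  letI : Fintype (orbitRel.Quotient H α) := Fintype.ofFinite _
  letI : ∀ ω : orbitRel.Quotient H α, Fintype ω.orbit := fun ω => Fintype.ofFinite _
  have horbout : ∀ ω : orbitRel.Quotient H α, ω.orbit = orbit H (Quotient.out ω) := fun ω =>
    orbitRel.Quotient.orbit_eq_orbit_out ω Quotient.out_eq'
  have hmem : ∀ ω : orbitRel.Quotient H α, (Quotient.out ω) ∈ ω.orbit := fun ω => by
    rw [horbout]; exact mem_orbit_self _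
  have hcard : Fintype.card α = ∑ ω : orbitRel.Quotient H α, Fintype.card ω.orbit := by
    rw [← Fintype.card_sigma]
    exact Fintype.card_congr (selfEquivSigmaOrbits' H α)
  set S : Finset (orbitRel.Quotient H α) :=
    Finset.univ.filter (fun ω => Fintype.card ω.orbit = 1) with hS
  -- each singleton orbit gives a fixed point
  have hfix : ∀ ω ∈ S, (Quotient.out ω) ∈ fixedPoints H α := by
    intro ω hω h
    have h1 : Fintype.card ω.orbit = 1 := by simpa [hS] using hω
    have hsub : (ω.orbit : Set α).Subsingleton := by
      rw [← Set.subsingleton_coe]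
      exact Fintype.card_le_one_iff_subsingleton.mp (le_of_eq h1)
    have : h • (Quotient.out ω) ∈ ω.orbit := by rw [horbout]; exact mem_orbit _ _
    exact hsub this (hmem ω)
  have hinj : Function.Injective
      (fun ω : {x // x ∈ S} => (⟨(Quotient.out ω.1), hfix ω.1 ω.2⟩ : fixedPoints H α)) := by
    rintro ⟨ω, hω⟩ ⟨ω', hω'⟩ h
    have : (Quotient.out ω) = (Quotient.out ω') := congrArg Subtype.val h
    exact Subtype.ext (Quotient.out_injective this)
  have hScard : S.card ≤ Nat.card (fixedPoints H α) := by
    have h3 := Nat.card_le_card_of_injective _ hinj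
    rwa [Nat.card_eq_fintype_card, Fintype.card_coe] at h3
  have hpt : ∀ ω : orbitRel.Quotient H α,
      2 ≤ Fintype.card ω.orbit + (if ω ∈ S then 1 else 0) := by
    intro ω
    have hpos : 1 ≤ Fintype.card ω.orbit := Fintype.card_pos_iff.mpr ⟨⟨(Quotient.out ω), hmem ω⟩⟩
    by_cases h : ω ∈ S
    · simp only [h, if_pos]; omega
    · have : Fintype.card ω.orbit ≠ 1 := by simpa [hS] using h
      simp only [h, if_neg, not_false_iff]; omega
  have hsum : 2 * Fintype.card (orbitRel.Quotient H α) ≤ Fintype.card α + S.card := by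
    calc 2 * Fintype.card (orbitRel.Quotient H α)
        = ∑ _ω : orbitRel.Quotient H α, 2 := by
          rw [Finset.sum_const, Finset.card_univ, smul_eq_mul, mul_comm]
      _ ≤ ∑ ω : orbitRel.Quotient H α,
            (Fintype.card ω.orbit + (if ω ∈ S then 1 else 0)) :=
          Finset.sum_le_sum (fun ω _ => hpt ω)
      _ = Fintype.card α + S.card := by
          rw [Finset.sum_add_distrib, ← hcard, Finset.sum_ite_mem, Finset.univ_inter,
            Finset.sum_const, smul_eq_mul, mul_one]
  rw [Nat.card_eq_fintype_card]
  omega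

open MulAction in
lemma fix_card_le {Ω M : Type*} [Fintype Ω] [Group M] [Finite M] [MulAction M Ω]
    [FaithfulSMul M Ω]
    (p k : ℕ) (hp : p.Prime) (hk : 1 ≤ k) (hcard : Fintype.card Ω = p ^ k)
    (hsolv : IsSolvable M) (hprim : IsPreprimitiveAction M Ω)
    (g : M) (hne : g ≠ 1) :
    Nat.card {x : Ω | g • x = x} ≤ p ^ (k - 1) := by
  classical
  have hMnt : Nontrivial M := ⟨g, 1, hne⟩
  -- minimal normal subgroup
  have hP : ∃ n : ℕ, ∃ H : Subgroup M, (H.Normal ∧ H ≠ ⊥) ∧ Nat.card H = n :=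
    ⟨Nat.card (⊤ : Subgroup M), ⊤, ⟨inferInstance, top_ne_bot⟩, rfl⟩
  obtain ⟨N, ⟨hNnorm, hNbot⟩, hNfind⟩ := Nat.find_spec hP
  have hNmin : ∀ H : Subgroup M, H.Normal → H ≠ ⊥ → H ≤ N → H = N := by
    intro H hH1 hH2 hle
    refine Subgroup.eq_of_le_of_card_ge hle ?_
    rw [hNfind]
    exact Nat.find_min' hP ⟨H, ⟨hH1, hH2⟩, rfl⟩
  haveI := hNnorm
  -- N is abelian
  have hNab : ∀ a ∈ N, ∀ b ∈ N, a * b = b * a := by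
    have hcomm : ⁅N, N⁆ = ⊥ := by
      by_contra hcne
      have heq : ⁅N, N⁆ = N :=
        hNmin _ (Subgroup.commutator_normal N N) hcne (Subgroup.commutator_le_left N N)
      haveI : Group.IsSolvable M := hsolv
      haveI : Group.IsSolvable ↥N := inferInstance
      obtain ⟨n, hn⟩ := this.solvable
      have hmap : ∀ m : ℕ, Subgroup.map N.subtype (derivedSeries ↥N m) = N := by
        intro m
        induction m with
        | zero =>
          simp only [derivedSeries_zero, ← MonoidHom.range_eq_map, Subgroup.range_subtype]
        | succ m ih =>
          rw [derivedSeries_succ, Subgroup.map_commutator, ih, heq]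
      have := hmap n
      rw [hn, Subgroup.map_bot] at this
      exact hNbot this.symm
    intro a ha b hb
    have := Subgroup.commutator_eq_bot_iff_le_centralizer.mp hcomm ha
    exact (Subgroup.mem_centralizer_iff.mp this b hb).symm
  -- N acts transitively
  have hblock : ∀ a : Ω, IsTrivialBlock (orbit N a) :=
    fun a => hprim.2 _ (IsBlock.orbit_of_normal a)
  obtain ⟨a₀, ha₀⟩ : ∃ a₀ : Ω, orbit N a₀ = Set.univ := by
    by_contra hall
    push_neg at hall
    have hsub : ∀ a : Ω, (orbit N a : Set Ω).Subsingleton := by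
      intro a
      rcases hblock a with h | h
      · exact h
      · exact absurd h (hall a)
    apply hNbot
    rw [eq_bot_iff]
    intro n hn
    have : (⟨n, hn⟩ : ↥N) = 1 := by
      apply FaithfulSMul.eq_of_smul_eq_smul (α := Ω)
      intro x
      have h1 : (⟨n, hn⟩ : ↥N) • x ∈ orbit N x := mem_orbit _ _
      have := hsub x h1 (mem_orbit_self x)
      simpa using this
    simpa [Subgroup.mk_eq_one] using this
  have horb : ∀ x : Ω, orbit N x = Set.univ := by
    intro x
    have hx : x ∈ orbit N a₀ := ha₀ ▸ Set.mem_univ x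
    rw [orbit_eq_iff.mpr hx, ha₀]
  have htrans : ∀ x y : Ω, ∃ n ∈ N, n • x = y := by
    intro x y
    have : y ∈ orbit N x := (horb x) ▸ Set.mem_univ y
    obtain ⟨⟨n, hn⟩, h⟩ := this
    exact ⟨n, hn, h⟩
  -- N acts freely
  have hfree : ∀ n ∈ N, ∀ x : Ω, n • x = x → n = 1 := by
    intro n hn x hx
    apply FaithfulSMul.eq_of_smul_eq_smul (α := Ω)
    intro y
    obtain ⟨m, hm, rfl⟩ := htrans x y
    calc n • m • x = (n * m) • x := (mul_smul n m x).symm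
      _ = (m * n) • x := by rw [hNab n hn m hm]
      _ = m • n • x := mul_smul m n x
      _ = m • x := by rw [hx]
      _ = (1 : M) • m • x := by rw [one_smul]
  -- card N = p ^ k
  have hNcard : Nat.card ↥N = p ^ k := by
    rw [← hcard, ← Nat.card_eq_fintype_card]
    apply Nat.card_eq_of_bijective (fun n : ↥N => (n : M) • a₀)
    constructor
    · rintro ⟨n, hn⟩ ⟨m, hm⟩ h
      simp only at h
      have : (m⁻¹ * n) • a₀ = a₀ := by
        rw [mul_smul, h, ← mul_smul, inv_mul_cancel, one_smul]
      have := hfree _ (N.mul_mem (N.inv_mem hm) hn) a₀ this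
      exact Subtype.ext (by rwa [inv_mul_eq_one, eq_comm] at this)
    · intro y
      obtain ⟨n, hn, h⟩ := htrans a₀ y
      exact ⟨⟨n, hn⟩, h⟩
  -- centralizer bound on fixed points
  rcases Set.eq_empty_or_nonempty {x : Ω | g • x = x} with hFe | ⟨x₀, hx₀⟩
  · rw [hFe]; simp
  · have hgx₀ : g • x₀ = x₀ := hx₀
    have hginv : g⁻¹ • x₀ = x₀ := by
      conv_lhs => rw [← hgx₀]
      rw [← mul_smul, inv_mul_cancel, one_smul]
    set C : Subgroup M := N ⊓ Subgroup.centralizer {g} with hC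
    have hmap : ∀ x : {x : Ω | g • x = x}, ∃ c : ↥C, (c : M) • x₀ = (x : Ω) := by
      rintro ⟨x, hx⟩
      have hx' : g • x = x := hx
      obtain ⟨n, hn, hnx⟩ := htrans x₀ x
      refine ⟨⟨n, Subgroup.mem_inf.mpr ⟨hn, ?_⟩⟩, hnx⟩
      rw [Subgroup.mem_centralizer_iff]
      rintro j hj
      rw [Set.mem_singleton_iff] at hj
      rw [hj]
      have h1 : (g * n * g⁻¹) • x₀ = n • x₀ := by
        calc (g * n * g⁻¹) • x₀ = g • n • (g⁻¹ • x₀) := by rw [mul_smul, mul_smul]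
          _ = g • (n • x₀) := by rw [hginv]
          _ = g • x := by rw [hnx]
          _ = x := hx'
          _ = n • x₀ := hnx.symm
      have h2 : (n⁻¹ * (g * n * g⁻¹)) • x₀ = x₀ := by
        rw [mul_smul, h1, ← mul_smul, inv_mul_cancel, one_smul]
      have hmem : n⁻¹ * (g * n * g⁻¹) ∈ N :=
        N.mul_mem (N.inv_mem hn) (hNnorm.conj_mem n hn g)
      have h3 := hfree _ hmem _ h2
      have h4 : g * n * g⁻¹ = n := by
        rw [inv_mul_eq_one] at h3; exact h3.symm
      calc g * n = g * n * g⁻¹ * g := by group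
        _ = n * g := by rw [h4]
    choose f hf using hmap
    have hfinj : Function.Injective f := by
      intro x x' h
      apply Subtype.ext
      rw [← hf x, ← hf x', h]
    have hCle : Nat.card {x : Ω | g • x = x} ≤ Nat.card ↥C :=
      Nat.card_le_card_of_injective f hfinj
    -- C is a proper subgroup of N
    have hCN : C ≠ N := by
      intro hCeq
      apply hne
      apply FaithfulSMul.eq_of_smul_eq_smul (α := Ω)
      intro y
      obtain ⟨n, hn, rfl⟩ := htrans x₀ y
      have hncen : n ∈ Subgroup.centralizer {g} := (hCeq ▸ hn : n ∈ C).2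
      have hcomm : g * n = n * g :=
        (Subgroup.mem_centralizer_iff.mp hncen g (Set.mem_singleton g))
      calc g • n • x₀ = (g * n) • x₀ := (mul_smul _ _ _).symm
        _ = (n * g) • x₀ := by rw [hcomm]
        _ = n • g • x₀ := mul_smul _ _ _
        _ = n • x₀ := by rw [hgx₀]
        _ = (1 : M) • n • x₀ := (one_smul _ _).symm
    have hdvd : Nat.card ↥C ∣ p ^ k := hNcard ▸ Subgroup.card_dvd_of_le inf_le_left
    obtain ⟨i, hik, hCc⟩ := (Nat.dvd_prime_pow hp).mp hdvd
    have hilt : i < k := by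
      rcases lt_or_eq_of_le hik with h | h
      · exact h
      · exfalso
        apply hCN
        apply Subgroup.eq_of_le_of_card_ge inf_le_left
        rw [hNcard, hCc, h]
    calc Nat.card {x : Ω | g • x = x} ≤ Nat.card ↥C := hCle
      _ = p ^ i := hCc
      _ ≤ p ^ (k - 1) := Nat.pow_le_pow_right hp.pos (by omega)

/-- (Zariski) Let `G` be a solvable subgroup of the symmetric group of a finite set `Ω`
with `|Ω| = p ^ k` (`p` prime, `k ≥ 1`), acting primitively on `Ω`. For `g ∈ G`, `g ≠ 1`,
let `r` be the number of orbits of the cyclic subgroup generated by `g` on `Ω` and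
`b = |Ω| - r`. Then `2 * b ≥ p ^ k - p ^ (k - 1)`. -/
theorem zariski_branch_multiplicity_bound {Ω : Type*} [Fintype Ω]
    (p k : ℕ) (hp : p.Prime) (hk : 1 ≤ k) (hcard : Fintype.card Ω = p ^ k)
    (G : Subgroup (Equiv.Perm Ω)) (hsolv : IsSolvable G)
    (hprim : IsPreprimitiveAction G Ω)
    (g : Equiv.Perm Ω) (hg : g ∈ G) (hne : g ≠ 1)
    (r b : ℕ)
    (hr : r = Nat.card (MulAction.orbitRel.Quotient (Subgroup.zpowers g) Ω))
    (hb : b = Fintype.card Ω - r) :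
    p ^ k - p ^ (k - 1) ≤ 2 * b := by
  classical
  haveI : FaithfulSMul G Ω := ⟨fun {m₁ m₂} h => Subtype.ext (Equiv.ext fun x => h x)⟩
  have hne' : (⟨g, hg⟩ : G) ≠ 1 := fun h => hne (congrArg Subtype.val h)
  have fixle : Nat.card {x : Ω | (⟨g, hg⟩ : G) • x = x} ≤ p ^ (k - 1) :=
    fix_card_le p k hp hk hcard hsolv hprim _ hne'
  have countle := two_mul_card_quot_le Ω (Subgroup.zpowers g)
  have hsub : (MulAction.fixedPoints (Subgroup.zpowers g) Ω : Set Ω) ⊆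
      {x : Ω | (⟨g, hg⟩ : G) • x = x} := fun x hx => hx ⟨g, Subgroup.mem_zpowers g⟩
  have h1 : Nat.card (MulAction.fixedPoints (Subgroup.zpowers g) Ω) ≤ p ^ (k - 1) :=
    le_trans (Nat.card_mono (Set.toFinite _) hsub) fixle
  have h2 : p ^ (k - 1) ≤ p ^ k := Nat.pow_le_pow_right hp.pos (by omega)
  have h3 : r ≤ p ^ k := by
    rw [hr, ← hcard, ← Nat.card_eq_fintype_card]
    exact Nat.card_le_card_of_surjective _ (Quotient.mk''_surjective)
  rw [hcard] at hb
  rw [← hr, hcard] at countle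
  omega
end

section
/- (Zariski, refined bound for p = 2) Let Ω be a finite set with |Ω| = 2^k for an integer k ≥ 1, suppose that 2^k − 1 is a prime number, and let G be a solvable subgroup of Sym(Ω) acting primitively on Ω. For g ∈ G with g ≠ 1, let r(g) denote the number of orbits of the cyclic subgroup generated by g on Ω, and set b(g) = |Ω| − r(g). Then b(g) ≥ 2^{k-1} − 1. -/
section ZariskiAux

open MulAction Subgroup
open scoped Pointwise

variable {Ω : Type*} [Fintype Ω]

lemma smul_orbit_of_norm {G : Subgroup (Equiv.Perm Ω)} (K : Subgroup (Equiv.Perm Ω))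
    (hn : ∀ g ∈ G, ∀ n ∈ K, g * n * g⁻¹ ∈ K) {g : Equiv.Perm Ω} (hg : g ∈ G) (x : Ω) :
    g • (MulAction.orbit K x) = MulAction.orbit K (g • x) := by
  ext y
  rw [Set.mem_smul_set_iff_inv_smul_mem, MulAction.mem_orbit_iff, MulAction.mem_orbit_iff]
  constructor
  · rintro ⟨⟨n, hnK⟩, hk⟩
    rw [Subgroup.mk_smul] at hk
    refine ⟨⟨g * n * g⁻¹, hn g hg n hnK⟩, ?_⟩
    rw [Subgroup.mk_smul, smul_smul, mul_assoc, inv_mul_cancel, mul_one, mul_smul, hk]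
    simp
  · rintro ⟨⟨n, hnK⟩, hk⟩
    rw [Subgroup.mk_smul] at hk
    refine ⟨⟨g⁻¹ * n * g, by simpa using hn g⁻¹ (inv_mem hg) n hnK⟩, ?_⟩
    rw [Subgroup.mk_smul, ← hk]
    simp [smul_smul, mul_assoc]

lemma transitive_of_norm {G : Subgroup (Equiv.Perm Ω)}
    (htrans : ∀ x y : Ω, ∃ g ∈ G, g • x = y)
    (hblock : ∀ B : Set Ω, MulAction.IsBlock G B → MulAction.IsTrivialBlock B)
    (K : Subgroup (Equiv.Perm Ω)) (hKG : K ≤ G)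
    (hn : ∀ g ∈ G, ∀ n ∈ K, g * n * g⁻¹ ∈ K) (hK : K ≠ ⊥) :
    ∀ x y : Ω, ∃ n ∈ K, n • x = y := by
  intro x y
  have hcoe : ∀ (g : G) (B : Set Ω), g • B = (g : Equiv.Perm Ω) • B := fun g B => rfl
  have hB : MulAction.IsBlock G (MulAction.orbit K x) := by
    intro g₁ g₂ hne
    rw [hcoe, hcoe, smul_orbit_of_norm K hn g₁.2, smul_orbit_of_norm K hn g₂.2] at *
    rcases MulAction.orbit.eq_or_disjoint (G := K) ((g₁ : Equiv.Perm Ω) • x) ((g₂ : Equiv.Perm Ω) • x) with h | h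
    · exact absurd h hne
    · exact h
  rcases hblock _ hB with h | h
  · exfalso
    obtain ⟨n, hnK, hn1⟩ : ∃ n ∈ K, n ≠ 1 := by
      by_contra hc
      push_neg at hc
      exact hK (Subgroup.eq_bot_iff_forall K |>.mpr hc)
    obtain ⟨z, hz⟩ : ∃ z : Ω, n • z ≠ z := by
      by_contra hc
      push_neg at hc
      exact hn1 (Equiv.ext fun z => hc z)
    obtain ⟨g, hgG, hgx⟩ := htrans x z
    have horb : MulAction.orbit K z = g • MulAction.orbit K x := by
      rw [smul_orbit_of_norm K hn hgG, hgx]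
    have hsub : (MulAction.orbit K z).Subsingleton := by
      rw [horb, ← Set.image_smul]
      exact h.image _
    have hmem : n • z ∈ MulAction.orbit K z := MulAction.mem_orbit z (⟨n, hnK⟩ : K)
    exact hz (hsub hmem (MulAction.mem_orbit_self z))
  · obtain ⟨⟨n, hnK⟩, hk⟩ := MulAction.mem_orbit_iff.mp (h ▸ Set.mem_univ y)
    exact ⟨n, hnK, hk⟩

lemma exists_minimal_normal (G₀ : Subgroup (Equiv.Perm Ω)) (hG₀ : G₀ ≠ ⊥) :
    ∃ N : Subgroup (Equiv.Perm Ω), N ≤ G₀ ∧ (∀ g ∈ G₀, ∀ n ∈ N, g * n * g⁻¹ ∈ N) ∧ N ≠ ⊥ ∧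
      ∀ K : Subgroup (Equiv.Perm Ω), K ≤ G₀ → (∀ g ∈ G₀, ∀ n ∈ K, g * n * g⁻¹ ∈ K) → K ≠ ⊥ →
        K ≤ N → K = N := by
  classical
  set S : Set ℕ := {m | ∃ K : Subgroup (Equiv.Perm Ω),
    (K ≤ G₀ ∧ (∀ g ∈ G₀, ∀ n ∈ K, g * n * g⁻¹ ∈ K) ∧ K ≠ ⊥) ∧ Nat.card K = m} with hS
  have hne : S.Nonempty := ⟨Nat.card G₀, G₀, ⟨le_refl _, fun g hg n hn => mul_mem (mul_mem hg hn) (inv_mem hg), hG₀⟩, rfl⟩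
  obtain ⟨N, ⟨hNG, hNnorm, hNbot⟩, hNcard⟩ := Nat.sInf_mem hne
  refine ⟨N, hNG, hNnorm, hNbot, fun K hKG hKnorm hKbot hKN => ?_⟩
  have h1 : sInf S ≤ Nat.card K := Nat.sInf_le ⟨K, ⟨hKG, hKnorm, hKbot⟩, rfl⟩
  exact Subgroup.eq_of_le_of_card_ge hKN (hNcard ▸ h1)

lemma abelian_of_minimal_normal {G₀ N : Subgroup (Equiv.Perm Ω)} (hsolv : IsSolvable G₀)
    (hNG : N ≤ G₀) (hNnorm : ∀ g ∈ G₀, ∀ n ∈ N, g * n * g⁻¹ ∈ N) (hNbot : N ≠ ⊥)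
    (hmin : ∀ K : Subgroup (Equiv.Perm Ω), K ≤ G₀ → (∀ g ∈ G₀, ∀ n ∈ K, g * n * g⁻¹ ∈ K) →
      K ≠ ⊥ → K ≤ N → K = N) :
    ∀ a ∈ N, ∀ b ∈ N, a * b = b * a := by
  have hKN : ⁅N, N⁆ ≤ N := by
    rw [Subgroup.commutator_le]
    intro a ha b hb
    exact mul_mem (mul_mem (mul_mem ha hb) (inv_mem ha)) (inv_mem hb)
  have hmap : ∀ g ∈ G₀, Subgroup.map (MulAut.conj g).toMonoidHom N = N := by
    intro g hg
    apply le_antisymm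
    · rintro _ ⟨n, hn, rfl⟩
      simpa using hNnorm g hg n hn
    · intro n hn
      exact ⟨g⁻¹ * n * g, by simpa using hNnorm g⁻¹ (inv_mem hg) n hn, by
        simp [mul_assoc]⟩
  have hKnorm : ∀ g ∈ G₀, ∀ n ∈ ⁅N, N⁆, g * n * g⁻¹ ∈ ⁅N, N⁆ := by
    intro g hg n hn
    have : Subgroup.map (MulAut.conj g).toMonoidHom ⁅N, N⁆ = ⁅N, N⁆ := by
      rw [Subgroup.map_commutator, hmap g hg]
    rw [← this]
    exact ⟨n, hn, by simp⟩
  by_cases hbot : ⁅N, N⁆ = ⊥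
  · intro a ha b hb
    open scoped commutatorElement in
    have : ⁅a, b⁆ ∈ (⊥ : Subgroup (Equiv.Perm Ω)) := hbot ▸ Subgroup.commutator_mem_commutator ha hb
    rw [Subgroup.mem_bot] at this
    exact commutatorElement_eq_one_iff_mul_comm.mp this
  · exfalso
    have hKeqN : ⁅N, N⁆ = N := hmin _ (hKN.trans hNG) hKnorm hbot hKN
    have hNsolv : IsSolvable N := by haveI : Group.IsSolvable G₀ := hsolv; exact solvable_of_solvable_injective (Subgroup.inclusion_injective hNG)
    -- commutator of ↥N is ⊤
    have hcomm : ⁅(⊤ : Subgroup N), (⊤ : Subgroup N)⁆ = ⊤ := by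
      apply Subgroup.map_injective N.subtype_injective
      rw [Subgroup.map_commutator]
      rw [← MonoidHom.range_eq_map, Subgroup.range_subtype, hKeqN]
    have hds : ∀ n : ℕ, derivedSeries N n = ⊤ := by
      intro n
      induction n with
      | zero => exact derivedSeries_zero N
      | succ n ih => rw [derivedSeries_succ, ih, hcomm]
    obtain ⟨n, hn⟩ := hNsolv
    rw [hds n] at hn
    apply hNbot
    rw [Subgroup.eq_bot_iff_forall]
    intro x hx
    have : (⟨x, hx⟩ : N) ∈ (⊥ : Subgroup N) := hn ▸ Subgroup.mem_top _
    simpa [Subgroup.mem_bot] using this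

lemma fix_le_two_aux {G : Subgroup (Equiv.Perm Ω)} (k : ℕ)
    (hcard : Fintype.card Ω = 2 ^ k) (hprime : Nat.Prime (2 ^ k - 1))
    (hsolv : IsSolvable G)
    (htrans : ∀ x y : Ω, ∃ g ∈ G, g • x = y)
    (hblock : ∀ B : Set Ω, MulAction.IsBlock G B → MulAction.IsTrivialBlock B)
    {g : Equiv.Perm Ω} (hg : g ∈ G) (hne : g ≠ 1)
    {α : Ω} (hα : g • α = α) :
    ∀ β γ : Ω, g • β = β → g • γ = γ → β ≠ α → γ ≠ α → β = γ := by
  classical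
  set p := 2 ^ k - 1 with hp
  -- N : minimal normal subgroup of G
  have hGbot : G ≠ ⊥ := by
    intro h
    rw [h, Subgroup.mem_bot] at hg
    exact hne hg
  obtain ⟨N, hNG, hNnorm, hNbot, hNmin⟩ := exists_minimal_normal G hGbot
  have hNab := abelian_of_minimal_normal hsolv hNG hNnorm hNbot hNmin
  have hNtrans : ∀ x y : Ω, ∃ n ∈ N, n • x = y :=
    transitive_of_norm htrans hblock N hNG hNnorm hNbot
  have hNreg : ∀ n ∈ N, ∀ x : Ω, n • x = x → n = 1 := by
    intro n hn x hx
    ext y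
    obtain ⟨m, hm, rfl⟩ := hNtrans x y
    have hcom : n * m = m * n := hNab n hn m hm
    show n • m • x = m • x
    rw [smul_smul, hcom, mul_smul, hx]
  -- H : stabilizer of α in G
  set H : Subgroup (Equiv.Perm Ω) := G ⊓ MulAction.stabilizer (Equiv.Perm Ω) α with hH
  have hgH : g ∈ H := ⟨hg, MulAction.mem_stabilizer_iff.mpr hα⟩
  have hHbot : H ≠ ⊥ := by
    intro h
    rw [h, Subgroup.mem_bot] at hgH
    exact hne hgH
  have hHG : H ≤ G := inf_le_left
  have hHsolv : IsSolvable H := by haveI : Group.IsSolvable G := hsolv; exact solvable_of_solvable_injective (Subgroup.inclusion_injective hHG)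
  have hHfix : ∀ h ∈ H, h • α = α := fun h hh => hh.2
  -- A : minimal normal subgroup of H
  obtain ⟨A, hAH, hAnorm, hAbot, hAmin⟩ := exists_minimal_normal H hHbot
  have hAab := abelian_of_minimal_normal hHsolv hAH hAnorm hAbot hAmin
  have hAG : A ≤ G := hAH.trans hHG
  have hAfixα : ∀ u ∈ A, u • α = α := fun u hu => hHfix u (hAH hu)
  -- W : centralizer of A in N, normalized by G
  set W : Subgroup (Equiv.Perm Ω) :=
    N ⊓ Subgroup.centralizer (A : Set (Equiv.Perm Ω)) with hWdef
  have hWnorm : ∀ q ∈ G, ∀ w ∈ W, q * w * q⁻¹ ∈ W := by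
    intro q hq w hw
    obtain ⟨hwN, hwC⟩ := Subgroup.mem_inf.mp hw
    rw [Subgroup.mem_centralizer_iff] at hwC
    obtain ⟨n, hnN, hnα⟩ := hNtrans α (q • α)
    set h : Equiv.Perm Ω := n⁻¹ * q with hhdef
    have hhH : h ∈ H := by
      refine Subgroup.mem_inf.mpr ⟨mul_mem (inv_mem (hNG hnN)) hq, MulAction.mem_stabilizer_iff.mpr ?_⟩
      rw [mul_smul, ← hnα, inv_smul_smul]
    have h1 : h * w * h⁻¹ ∈ N := hNnorm h (hHG hhH) w hwN
    have h2 : h * w * h⁻¹ ∈ Subgroup.centralizer (A : Set (Equiv.Perm Ω)) := by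
      rw [Subgroup.mem_centralizer_iff]
      intro u hu
      have hu' : h⁻¹ * u * h ∈ A := by
        have := hAnorm h⁻¹ (inv_mem hhH) u hu
        simpa using this
      have hcw := hwC (h⁻¹ * u * h) hu'
      -- (h⁻¹ u h) w = w (h⁻¹ u h)  ⟹  u (h w h⁻¹) = (h w h⁻¹) u
      have := congrArg (fun z => h * z * h⁻¹) hcw
      simpa [mul_assoc] using this
    have hcomm : n * (h * w * h⁻¹) = (h * w * h⁻¹) * n := hNab n hnN _ h1
    have hq_eq : q = n * h := by rw [hhdef]; group
    have : q * w * q⁻¹ = h * w * h⁻¹ := by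
      rw [hq_eq]
      rw [mul_inv_rev]
      calc n * h * w * (h⁻¹ * n⁻¹) = n * (h * w * h⁻¹) * n⁻¹ := by group
        _ = (h * w * h⁻¹) * n * n⁻¹ := by rw [hcomm]
        _ = h * w * h⁻¹ := by group
    rw [this]
    exact Subgroup.mem_inf.mpr ⟨h1, h2⟩
  -- every common fixed point of A is α
  have hWtriv : ∀ x : Ω, (∀ u ∈ A, u • x = x) → x = α := by
    have hWbot : W = ⊥ := by
      by_contra hWbot
      have hWG : W ≤ G := inf_le_left.trans hNG
      have hWtrans := transitive_of_norm htrans hblock W hWG hWnorm hWbot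
      apply hAbot
      rw [Subgroup.eq_bot_iff_forall]
      intro u hu
      ext y
      obtain ⟨w, hwW, hwy⟩ := hWtrans α y
      have hwC := Subgroup.mem_centralizer_iff.mp (Subgroup.mem_inf.mp hwW).2
      show u • y = y
      rw [← hwy, smul_smul, hwC u hu, mul_smul, hAfixα u hu]
    intro x hx
    obtain ⟨n, hnN, hnx⟩ := hNtrans α x
    have hnW : n ∈ W := by
      refine ⟨hnN, Subgroup.mem_centralizer_iff.mpr fun u hu => ?_⟩
      have h1 : u * n * u⁻¹ ∈ N := hNnorm u (hAG hu) n hnN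
      have hinvα : u⁻¹ • α = α := by
        rw [inv_smul_eq_iff, hAfixα u hu]
      have h2 : (u * n * u⁻¹) • α = n • α := by
        rw [mul_smul, mul_smul, hinvα, hnx, hx u hu]
      have h3 : (n⁻¹ * (u * n * u⁻¹)) • α = α := by
        rw [mul_smul, h2, inv_smul_smul]
      have h4 : n⁻¹ * (u * n * u⁻¹) ∈ N := mul_mem (inv_mem hnN) h1
      have h5 := hNreg _ h4 α h3
      have h6 : u * n * u⁻¹ = n := by
        have := congrArg (fun z => n * z) h5
        simpa [mul_assoc] using this
      have := congrArg (fun z => z * u) h6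
      simpa [mul_assoc] using this
    rw [hWbot, Subgroup.mem_bot] at hnW
    rw [← hnx, hnW, one_smul]
  -- an element of prime order in A
  obtain ⟨u₀, hu₀A, hu₀1⟩ : ∃ u ∈ A, u ≠ 1 := by
    by_contra hc
    push_neg at hc
    exact hAbot ((Subgroup.eq_bot_iff_forall A).mpr hc)
  set r := (orderOf u₀).minFac with hrdef
  have hord1 : orderOf u₀ ≠ 1 := by simpa [orderOf_eq_one_iff] using hu₀1
  have hrprime : r.Prime := Nat.minFac_prime hord1
  have hordpos : 0 < orderOf u₀ := orderOf_pos u₀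
  set u₁ := u₀ ^ (orderOf u₀ / r) with hu₁def
  have hu₁A : u₁ ∈ A := pow_mem hu₀A _
  have hu₁r : u₁ ^ r = 1 := by
    rw [hu₁def, ← pow_mul, Nat.div_mul_cancel (Nat.minFac_dvd _), pow_orderOf_eq_one]
  have hu₁1 : u₁ ≠ 1 := by
    intro h
    have hdvd : orderOf u₀ ∣ orderOf u₀ / r := orderOf_dvd_of_pow_eq_one h
    have hlt : orderOf u₀ / r < orderOf u₀ := Nat.div_lt_self hordpos hrprime.one_lt
    have hpos : 0 < orderOf u₀ / r :=
      Nat.div_pos (Nat.minFac_le hordpos) hrprime.pos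
    exact absurd (Nat.le_of_dvd hpos hdvd) (not_le.mpr hlt)
  -- A has exponent r
  have hAexp : ∀ u ∈ A, u ^ r = 1 := by
    set Ar : Subgroup (Equiv.Perm Ω) :=
      { carrier := {y | y ∈ A ∧ y ^ r = 1}
        one_mem' := ⟨one_mem A, one_pow r⟩
        mul_mem' := by
          rintro a b ⟨haA, har⟩ ⟨hbA, hbr⟩
          refine ⟨mul_mem haA hbA, ?_⟩
          have hcomm : Commute a b := hAab a haA b hbA
          rw [hcomm.mul_pow, har, hbr, one_mul]
        inv_mem' := by
          rintro a ⟨haA, har⟩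
          exact ⟨inv_mem haA, by rw [inv_pow, har, inv_one]⟩ } with hArdef
    have hmem : ∀ y, y ∈ Ar ↔ y ∈ A ∧ y ^ r = 1 := fun y => Iff.rfl
    have h1 : Ar ≤ A := fun y hy => ((hmem y).mp hy).1
    have h2 : ∀ h ∈ H, ∀ y ∈ Ar, h * y * h⁻¹ ∈ Ar := by
      intro h hh y hy
      obtain ⟨hyA, hyr⟩ := (hmem y).mp hy
      refine (hmem _).mpr ⟨hAnorm h hh y hyA, ?_⟩
      rw [conj_pow, hyr, mul_one, mul_inv_cancel]
    have hArbot : Ar ≠ ⊥ := by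
      intro hbot
      rw [Subgroup.eq_bot_iff_forall] at hbot
      exact hu₁1 (hbot u₁ ((hmem u₁).mpr ⟨hu₁A, hu₁r⟩))
    have hAr : Ar = A := hAmin Ar (h1.trans hAH) h2 hArbot h1
    intro u hu
    rw [← hAr] at hu
    exact ((hmem u).mp hu).2
  -- fixed points of A are exactly α
  have hAfixed : (MulAction.fixedPoints A Ω) = {α} := by
    ext x
    simp only [MulAction.mem_fixedPoints, Set.mem_singleton_iff]
    constructor
    · intro hx
      exact hWtriv x (fun u hu => hx ⟨u, hu⟩)
    · rintro rfl u
      exact hAfixα u.1 u.2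
  -- r = p
  haveI : Fact r.Prime := ⟨hrprime⟩
  have hAp : IsPGroup r A := by
    intro y
    refine ⟨1, ?_⟩
    rw [pow_one]
    exact Subtype.ext (by
      rw [SubgroupClass.coe_pow]
      simpa using hAexp y.1 y.2)
  have hcardΩ : Nat.card Ω = 2 ^ k := by rw [Nat.card_eq_fintype_card, hcard]
  have hfix1 : Nat.card (MulAction.fixedPoints A Ω) = 1 := by
    rw [hAfixed, Nat.card_coe_set_eq, Set.ncard_singleton]
  have hmod := hAp.card_modEq_card_fixedPoints Ω
  rw [hcardΩ, hfix1] at hmod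
  have hrdvd : r ∣ 2 ^ k - 1 :=
    (Nat.modEq_iff_dvd' Nat.one_le_two_pow).mp hmod.symm
  have hrp : r = p := by
    rcases hprime.eq_one_or_self_of_dvd r hrdvd with h | h
    · exact absurd h hrprime.ne_one
    · exact h
  -- the complement of α
  have hsetcompl : {x : Ω | x ≠ α} = (Set.univ \ {α} : Set Ω) := by
    ext x; simp
  have hcompl : ({x : Ω | x ≠ α} : Set Ω).ncard = p := by
    rw [hsetcompl, Set.ncard_diff_singleton_of_mem (Set.mem_univ α), Set.ncard_univ, hcardΩ]
  haveI : Fact p.Prime := ⟨hrp ▸ hrprime⟩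
  -- orbits of subgroups of A on the complement of α
  have key : ∀ K : Subgroup (Equiv.Perm Ω), K ≤ A → ∀ β : Ω, β ≠ α →
      (∃ u ∈ K, u • β ≠ β) → MulAction.orbit K β = {x : Ω | x ≠ α} := by
    rintro K hKA β hβα ⟨u, huK, huβ⟩
    have hKp : IsPGroup p K := by
      intro y
      refine ⟨1, ?_⟩
      rw [pow_one]
      refine Subtype.ext ?_
      rw [SubgroupClass.coe_pow]
      rw [← hrp]
      simpa using hAexp y.1 (hKA y.2)
    obtain ⟨m, hm⟩ := hKp.card_orbit β
    have hsub : MulAction.orbit K β ⊆ {x : Ω | x ≠ α} := by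
      rintro x ⟨v, rfl⟩
      intro hvα
      have hvα' : (v : Equiv.Perm Ω) • β = α := hvα
      apply hβα
      calc β = (v : Equiv.Perm Ω)⁻¹ • ((v : Equiv.Perm Ω) • β) := (inv_smul_smul _ _).symm
        _ = (v : Equiv.Perm Ω)⁻¹ • α := by rw [hvα']
        _ = α := by rw [inv_smul_eq_iff, hAfixα v.1 (hKA v.2)]
    have hle : (MulAction.orbit K β).ncard ≤ p := by
      rw [← hcompl]
      exact Set.ncard_le_ncard hsub (Set.toFinite _)
    have hge2 : 2 ≤ (MulAction.orbit K β).ncard := by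
      have hmem2 : u • β ∈ MulAction.orbit K β := MulAction.mem_orbit β (⟨u, huK⟩ : K)
      have := (Set.one_lt_ncard (Set.toFinite _)).mpr
        ⟨u • β, hmem2, β, MulAction.mem_orbit_self β, huβ⟩
      omega
    have hcard_orbit : (MulAction.orbit K β).ncard = p ^ m := by
      rw [← Nat.card_coe_set_eq, hm]
    have hm1 : 1 ≤ m := by
      by_contra hc
      push_neg at hc
      interval_cases m
      rw [hcard_orbit, pow_zero] at hge2
      omega
    have hple : p ^ m ≤ p := by rw [← hcard_orbit]; exact hle
    have hpeq : p ^ m = p := by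
      have : p ^ 1 ≤ p ^ m := Nat.pow_le_pow_right hprime.pos hm1
      rw [pow_one] at this
      exact le_antisymm hple this
    refine (Set.eq_of_subset_of_ncard_le hsub ?_ (Set.toFinite _))
    rw [hcompl, hcard_orbit, hpeq]
  -- freeness of A away from α
  have hfree : ∀ u ∈ A, ∀ x : Ω, x ≠ α → u • x = x → u = 1 := by
    intro u hu x hxα hux
    have hxnf : x ∉ MulAction.fixedPoints A Ω := by
      rw [hAfixed]
      simpa using hxα
    have hmove : ∃ v ∈ A, v • x ≠ x := by
      by_contra hc
      push_neg at hc
      exact hxnf (fun v => hc v.1 v.2)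
    have horb := key A le_rfl x hxα hmove
    ext y
    show u • y = y
    by_cases hyα : y = α
    · rw [hyα]; exact hAfixα u hu
    · have hyo : y ∈ MulAction.orbit A x := by
        rw [horb]; exact hyα
      obtain ⟨v, hvy⟩ := hyo
      have hvy' : (v : Equiv.Perm Ω) • x = y := hvy
      rw [← hvy', smul_smul, hAab u hu v.1 v.2, mul_smul, hux]
  -- points other than α are never mapped to α by A
  have hu₀β : ∀ x : Ω, x ≠ α → ∀ u ∈ A, u • x ≠ α := by
    intro x hxα u hu hc
    apply hxα
    have h1 : (u : Equiv.Perm Ω)⁻¹ • α = α := by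
      rw [inv_smul_eq_iff, hAfixα u hu]
    rw [← h1, ← hc]
    simp
  -- main conclusion
  intro β γ hgβ hgγ hβα hγα
  have hu₀moves : u₀ • β ≠ β := fun h => hu₀1 (hfree u₀ hu₀A β hβα h)
  have hzle : Subgroup.zpowers u₀ ≤ A := by
    rw [Subgroup.zpowers_le]
    exact hu₀A
  have hzorb := key (Subgroup.zpowers u₀) hzle β hβα
    ⟨u₀, Subgroup.mem_zpowers u₀, hu₀moves⟩
  have hAz : ∀ u ∈ A, ∃ s : ℤ, u = u₀ ^ s := by
    intro u hu
    have hmem : u • β ∈ MulAction.orbit (Subgroup.zpowers u₀) β := by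
      rw [hzorb]
      exact hu₀β β hβα u hu
    obtain ⟨v, hv⟩ := hmem
    obtain ⟨s, hs⟩ := v.2
    have hs' : u₀ ^ s = (v : Equiv.Perm Ω) := hs
    have hv' : (v : Equiv.Perm Ω) • β = u • β := hv
    rw [← hs'] at hv'
    have hfix : (u₀ ^ (-s) * u) • β = β := by
      rw [mul_smul, ← hv', zpow_neg, inv_smul_smul]
    have hmem2 : u₀ ^ (-s) * u ∈ A := mul_mem (zpow_mem hu₀A _) hu
    have h1 := hfree _ hmem2 β hβα hfix
    refine ⟨s, ?_⟩
    have h2 := congrArg (fun z => u₀ ^ s * z) h1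
    simpa [← mul_assoc, ← zpow_add] using h2
  have hordu₀ : orderOf u₀ = p := by
    have hdvd : orderOf u₀ ∣ p := orderOf_dvd_of_pow_eq_one (hrp ▸ hAexp u₀ hu₀A)
    rcases hprime.eq_one_or_self_of_dvd _ hdvd with h | h
    · exact absurd h hord1
    · exact h
  obtain ⟨j, hj⟩ := hAz _ (hAnorm g hgH u₀ hu₀A)
  by_cases hcase : u₀ ^ j = u₀
  · -- g centralizes u₀, hence fixes everything: contradiction
    exfalso
    apply hne
    ext y
    show g • y = y
    by_cases hyα : y = α
    · rw [hyα]; exact hα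
    · have hyo : y ∈ MulAction.orbit (Subgroup.zpowers u₀) β := by
        rw [hzorb]; exact hyα
      obtain ⟨v, hvy⟩ := hyo
      obtain ⟨s, hs⟩ := v.2
      have hs' : u₀ ^ s = (v : Equiv.Perm Ω) := hs
      have hvy' : (v : Equiv.Perm Ω) • β = y := hvy
      rw [← hs'] at hvy'
      have h1 : (g * u₀ * g⁻¹) ^ s = g * u₀ ^ s * g⁻¹ := conj_zpow
      rw [hj, hcase] at h1
      have hcomm : g * u₀ ^ s = u₀ ^ s * g := by
        have h2 := congrArg (fun z => z * g) h1
        simpa [mul_assoc] using h2.symm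
      rw [← hvy', smul_smul, hcomm, mul_smul, hgβ]
  · -- the semilinear case
    have hγo : γ ∈ MulAction.orbit (Subgroup.zpowers u₀) β := by
      rw [hzorb]; exact hγα
    obtain ⟨v, hvγ⟩ := hγo
    obtain ⟨s, hs⟩ := v.2
    have hs' : u₀ ^ s = (v : Equiv.Perm Ω) := hs
    have hvγ' : (u₀ ^ s) • β = γ := by
      rw [hs']; exact hvγ
    have h1 : (g * u₀ * g⁻¹) ^ s = g * u₀ ^ s * g⁻¹ := conj_zpow
    rw [hj, ← zpow_mul] at h1
    have h3 : g * u₀ ^ s = u₀ ^ (j * s) * g := by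
      have h2 := congrArg (fun z => z * g) h1
      simpa [mul_assoc] using h2.symm
    have h2 : u₀ ^ (j * s) • β = u₀ ^ s • β := by
      have hγfix : g • γ = γ := hgγ
      rw [← hvγ', smul_smul, h3, mul_smul, hgβ] at hγfix
      exact hγfix
    have hfixβ : (u₀ ^ (-(j * s) + s)) • β = β := by
      rw [zpow_add, mul_smul, ← h2, zpow_neg, inv_smul_smul]
    have hone : u₀ ^ (-(j * s) + s) = 1 := hfree _ (zpow_mem hu₀A _) β hβα hfixβ
    have hdvd : ((p : ℕ) : ℤ) ∣ (-(j * s) + s) := by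
      rw [← hordu₀]
      exact orderOf_dvd_iff_zpow_eq_one.mpr hone
    have heq : (-(j * s) + s) = (1 - j) * s := by ring
    have hpZ : Prime ((p : ℕ) : ℤ) := Nat.prime_iff_prime_int.mp hprime
    rw [heq] at hdvd
    rcases hpZ.dvd_mul.mp hdvd with hd | hd
    · exfalso
      apply hcase
      have hone2 : u₀ ^ ((1 : ℤ) - j) = 1 := by
        apply orderOf_dvd_iff_zpow_eq_one.mp
        rw [hordu₀]
        exact hd
      have h5 := congrArg (fun z => z * u₀ ^ j) hone2
      simpa [← zpow_add, sub_add_cancel] using h5.symm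
    · have h6 : u₀ ^ s = 1 := by
        have : (orderOf u₀ : ℤ) ∣ s := by rw [hordu₀]; exact hd
        exact orderOf_dvd_iff_zpow_eq_one.mp this
      rw [← hvγ', h6, one_smul]

end ZariskiAux

/-- (Zariski, refined bound for `p = 2`) Let `G` be a solvable subgroup of the symmetric
group of a finite set `Ω` with `|Ω| = 2 ^ k`, `k ≥ 1`, where `2 ^ k - 1` is prime, acting
primitively on `Ω`. For `g ∈ G`, `g ≠ 1`, let `r` be the number of orbits of the cyclic
subgroup generated by `g` on `Ω` and `b = |Ω| - r`. Then `b ≥ 2 ^ (k - 1) - 1`. -/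
theorem zariski_branch_multiplicity_bound_two {Ω : Type*} [Fintype Ω]
    (k : ℕ) (hk : 1 ≤ k) (hcard : Fintype.card Ω = 2 ^ k)
    (hprime : Nat.Prime (2 ^ k - 1))
    (G : Subgroup (Equiv.Perm Ω)) (hsolv : IsSolvable G)
    (hprim : IsPreprimitiveAction G Ω)
    (g : Equiv.Perm Ω) (hg : g ∈ G) (hne : g ≠ 1)
    (r b : ℕ)
    (hr : r = Nat.card (MulAction.orbitRel.Quotient (Subgroup.zpowers g) Ω))
    (hb : b = Fintype.card Ω - r) :
    2 ^ (k - 1) - 1 ≤ b := by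
  classical
  obtain ⟨htrans, hblock⟩ := hprim
  have htrans' : ∀ x y : Ω, ∃ g ∈ G, g • x = y := by
    intro x y
    obtain ⟨gg, hgg⟩ := htrans.exists_smul_eq x y
    exact ⟨gg.1, gg.2, hgg⟩
  set F : Set Ω := {x | g • x = x} with hF
  have hF2 : F.ncard ≤ 2 := by
    by_cases hFe : F = ∅
    · rw [hFe]; simp
    · obtain ⟨α, hα⟩ := Set.nonempty_iff_ne_empty.mpr hFe
      have hclaim := fix_le_two_aux k hcard hprime hsolv htrans' hblock hg hne hα
      by_cases hFsub : ∀ x ∈ F, x = α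
      · have hss : F ⊆ {α} := hFsub
        calc F.ncard ≤ ({α} : Set Ω).ncard := Set.ncard_le_ncard hss (Set.toFinite _)
          _ = 1 := Set.ncard_singleton α
          _ ≤ 2 := by omega
      · push_neg at hFsub
        obtain ⟨β, hβF, hβα⟩ := hFsub
        have hss : F ⊆ {α, β} := by
          intro x hx
          by_cases hxα : x = α
          · exact Or.inl hxα
          · exact Or.inr (hclaim x β hx hβF hxα hβα)
        calc F.ncard ≤ ({α, β} : Set Ω).ncard := Set.ncard_le_ncard hss (Set.toFinite _)
          _ ≤ ({β} : Set Ω).ncard + 1 := Set.ncard_insert_le α {β}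
          _ ≤ 2 := by simp [Set.ncard_singleton]



  set Z := Subgroup.zpowers g with hZ
  set Q := MulAction.orbitRel.Quotient Z Ω with hQ
  haveI : Finite Q := Quotient.finite _
  haveI : Fintype Q := Fintype.ofFinite Q
  have hr' : r = Fintype.card Q := by rw [hr, Nat.card_eq_fintype_card]
  have horb_eq : ∀ q : Q, MulAction.orbitRel.Quotient.orbit q = MulAction.orbit Z q.out :=
    fun q => MulAction.orbitRel.Quotient.orbit_eq_orbit_out q Quotient.out_eq'
  set nq : Q → ℕ := fun q => (MulAction.orbitRel.Quotient.orbit q).ncard with hnq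
  have h1le : ∀ q : Q, 1 ≤ nq q := by
    intro q
    have hnon : (MulAction.orbitRel.Quotient.orbit q).Nonempty := by
      rw [horb_eq]
      exact ⟨q.out, MulAction.mem_orbit_self _⟩
    exact (Set.ncard_pos (Set.toFinite _)).mpr hnon
  have hsum : Fintype.card Ω = ∑ q : Q, nq q := by
    have e := MulAction.selfEquivSigmaOrbits' Z Ω
    rw [Fintype.card_congr e, Fintype.card_sigma]
    refine Finset.sum_congr rfl fun q _ => ?_
    show Fintype.card (MulAction.orbitRel.Quotient.orbit q) =
      (MulAction.orbitRel.Quotient.orbit q).ncard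
    rw [← Nat.card_coe_set_eq, Nat.card_eq_fintype_card]
  have hfixq : ∀ q : Q, nq q = 1 → g • q.out = q.out := by
    intro q h1
    obtain ⟨x, hx⟩ := Set.ncard_eq_one.mp h1
    have hout : q.out ∈ MulAction.orbitRel.Quotient.orbit q := by
      rw [horb_eq]; exact MulAction.mem_orbit_self _
    have hgout : g • q.out ∈ MulAction.orbitRel.Quotient.orbit q := by
      rw [horb_eq]
      exact MulAction.mem_orbit q.out (⟨g, Subgroup.mem_zpowers g⟩ : Z)
    rw [hx, Set.mem_singleton_iff] at hout hgout
    rw [hgout, hout]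
  have hFle : (Finset.univ.filter (fun q : Q => nq q = 1)).card ≤ F.ncard := by
    rw [Set.ncard_eq_toFinset_card' F]
    apply Finset.card_le_card_of_injOn (fun q => q.out)
    · intro q hq
      rw [Finset.mem_coe, Finset.mem_filter] at hq
      rw [Finset.mem_coe, Set.mem_toFinset]
      exact hfixq q hq.2
    · intro q1 _ q2 _ h
      exact Quotient.out_injective h
  have hsum2 : 2 * r ≤ Fintype.card Ω + F.ncard := by
    calc 2 * r = ∑ _q : Q, 2 := by
          simp [hr', Finset.sum_const, Finset.card_univ, mul_comm]
      _ ≤ ∑ q : Q, (nq q + if nq q = 1 then 1 else 0) := by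
          refine Finset.sum_le_sum fun q _ => ?_
          have := h1le q
          by_cases h : nq q = 1 <;> simp [h] <;> omega
      _ = ∑ q : Q, nq q + ∑ q : Q, (if nq q = 1 then 1 else 0) := Finset.sum_add_distrib
      _ = Fintype.card Ω + (Finset.univ.filter (fun q : Q => nq q = 1)).card := by
          rw [← hsum, Finset.sum_boole, Nat.cast_id]
      _ ≤ Fintype.card Ω + F.ncard := Nat.add_le_add_left hFle _
  have h2k : 2 ^ k = 2 * 2 ^ (k - 1) := by
    conv_lhs => rw [show k = (k - 1) + 1 from (Nat.sub_add_cancel hk).symm]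
    rw [pow_succ, mul_comm]
  have hpow : 1 ≤ 2 ^ (k - 1) := Nat.one_le_two_pow
  rw [hcard] at hsum2 hb
  omega
end

section
/- Let G be a solvable subgroup of the symmetric group of a 5-element set Ω, acting primitively on Ω. Then there exists a bijection e : Ω ≃ ZMod 5 such that every g ∈ G acts as an affinity of ZMod 5: for each g ∈ G there exist a unit a ∈ (ZMod 5)ˣ and b ∈ ZMod 5 with e(g(x)) = a·e(x) + b for all x ∈ Ω. -/
/-- Let `G` be a solvable subgroup of the symmetric group of a `5`-element set `Ω`, acting
primitively on `Ω`. Then there is a bijection `e : Ω ≃ ZMod 5` through which every `g ∈ G`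
acts as an affinity `x ↦ a * x + b` with `a ∈ (ZMod 5)ˣ` and `b ∈ ZMod 5`. -/
theorem solvable_primitive_degree_five_acts_affinely {Ω : Type*} [Fintype Ω]
    (hΩ : Fintype.card Ω = 5)
    (G : Subgroup (Equiv.Perm Ω)) (hsolv : IsSolvable G)
    (hprim : IsPreprimitiveAction G Ω) :
    ∃ e : Ω ≃ ZMod 5, ∀ g : G, ∃ (a : (ZMod 5)ˣ) (b : ZMod 5),
      ∀ x : Ω, e ((g : Equiv.Perm Ω) x) = (a : ZMod 5) * e x + b := by
  classical
  have hp : Fact (Nat.Prime 5) := ⟨by norm_num⟩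
  obtain ⟨htrans, hblocks⟩ := hprim
  have hnt : Nontrivial Ω := Fintype.one_lt_card_iff_nontrivial.mp (by omega)
  have hsmul : ∀ (g : G) (x : Ω), g • x = (g : Equiv.Perm Ω) x := fun g x => rfl
  -- G is nontrivial
  have hGnt : Nontrivial G := by
    obtain ⟨x, y, hxy⟩ := hnt
    obtain ⟨g, hg⟩ := htrans.exists_smul_eq x y
    refine ⟨g, 1, fun h => hxy ?_⟩
    rw [← hg, h, one_smul]
  -- a nontrivial abelian normal subgroup of G
  obtain ⟨N, hN_norm, hN_ne, hN_comm⟩ :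
      ∃ N : Subgroup G, N.Normal ∧ N ≠ ⊥ ∧ ∀ a ∈ N, ∀ b ∈ N, a * b = b * a := by
    obtain ⟨n, hn⟩ := hsolv
    have hex : ∃ n, derivedSeries (↥G) n = ⊥ := ⟨n, hn⟩
    have hk0 : Nat.find hex ≠ 0 := by
      intro h
      have h2 := Nat.find_spec hex
      rw [h, derivedSeries_zero] at h2
      obtain ⟨a, b, hab⟩ := hGnt
      have ha : a ∈ (⊥ : Subgroup (↥G)) := h2 ▸ Subgroup.mem_top a
      have hb : b ∈ (⊥ : Subgroup (↥G)) := h2 ▸ Subgroup.mem_top b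
      rw [Subgroup.mem_bot] at ha hb
      exact hab (ha.trans hb.symm)
    obtain ⟨m, hm⟩ := Nat.exists_eq_succ_of_ne_zero hk0
    refine ⟨derivedSeries (↥G) m, derivedSeries_normal _ _, ?_, ?_⟩
    · exact Nat.find_min hex (by omega)
    · intro a ha b hb
      have hmem : @Bracket.bracket _ _ commutatorElement a b ∈ derivedSeries (↥G) (m + 1) := by
        rw [derivedSeries_succ]
        exact Subgroup.commutator_mem_commutator ha hb
      have hbot : derivedSeries (↥G) (m + 1) = ⊥ := by
        rw [← Nat.succ_eq_add_one, ← hm]; exact Nat.find_spec hex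
      rw [hbot, Subgroup.mem_bot] at hmem
      exact (commutatorElement_eq_one_iff_commute.mp hmem).eq
  obtain ⟨x0⟩ : Nonempty Ω := inferInstance
  -- elements of G acting trivially are trivial
  have hfaith : ∀ g : G, (∀ x : Ω, (g : Equiv.Perm Ω) x = x) → g = 1 := by
    intro g hg
    ext x
    simp [hg x]
  -- the orbit of N is everything
  have horb_univ : ∀ z : Ω, MulAction.orbit N z = Set.univ := by
    by_contra hcon
    push_neg at hcon
    obtain ⟨z, hz⟩ := hcon
    have htriv := hblocks _ (MulAction.IsBlock.orbit_of_normal (N := N) z)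
    have hsing : (MulAction.orbit N z).Subsingleton := htriv.resolve_right hz
    apply hN_ne
    rw [Subgroup.eq_bot_iff_forall]
    intro n hn
    apply hfaith
    intro x
    obtain ⟨g, hg⟩ := htrans.exists_smul_eq z x
    have hmem : ((⟨g⁻¹ * n * g, by simpa using hN_norm.conj_mem n hn g⁻¹⟩ : N)) • z
        ∈ MulAction.orbit N z := MulAction.mem_orbit _ _
    have h1 : (g⁻¹ * n * g) • z = z :=
      hsing hmem (MulAction.mem_orbit_self z)
    have h2 : n • (g • z) = g • z := by
      have := congrArg (fun w => g • w) h1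
      simpa [mul_smul] using this
    rw [hg] at h2
    simpa [hsmul] using h2
  -- N acts transitively with trivial stabilizers, so it has 5 elements
  have hNtrans : ∀ x : Ω, ∃ n : N, (n : G) • x0 = x := by
    intro x
    have : x ∈ MulAction.orbit N x0 := by rw [horb_univ x0]; trivial
    obtain ⟨n, hn⟩ := this
    exact ⟨n, hn⟩
  have hNreg : ∀ n : N, (n : G) • x0 = x0 → n = 1 := by
    intro n hfix
    have htrivial : ∀ x : Ω, ((n : G) : Equiv.Perm Ω) x = x := by
      intro x
      obtain ⟨m, hm⟩ := hNtrans x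
      rw [← hm, ← hsmul, ← mul_smul, hN_comm _ n.2 _ m.2, mul_smul, hfix]
    have : (n : G) = 1 := hfaith _ htrivial
    exact Subtype.ext this
  have hNbij : Function.Bijective (fun n : N => (n : G) • x0) := by
    constructor
    · intro n m h
      have : ((m⁻¹ * n : N) : G) • x0 = x0 := by
        push_cast
        rw [mul_smul]
        simp only at h
        rw [h, ← mul_smul]
        simp
      exact (inv_mul_eq_one.mp (hNreg _ this)).symm
    · intro x
      obtain ⟨n, hn⟩ := hNtrans x
      exact ⟨n, hn⟩
  have hNcard : Nat.card N = 5 := by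
    rw [Nat.card_eq_of_bijective _ hNbij, Nat.card_eq_fintype_card, hΩ]
  haveI : IsCyclic N := isCyclic_of_prime_card hNcard
  obtain ⟨c, hc⟩ := IsCyclic.exists_generator (α := N)
  have hc_ord : orderOf c = 5 := by
    have hdvd : orderOf c ∣ 5 := hNcard ▸ orderOf_dvd_natCard c
    rcases (Nat.Prime.eq_one_or_self_of_dvd (by norm_num) _ hdvd) with h1 | h5
    · exfalso
      have hc1 : c = 1 := orderOf_eq_one_iff.mp h1
      have : ∀ x : N, x = 1 := by
        intro x
        obtain ⟨k, hk⟩ := hc x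
        rw [← hk, hc1]; simp
      have hsub : Subsingleton N := ⟨fun a b => by rw [this a, this b]⟩
      have : Nat.card N = 1 := Nat.card_eq_one_iff_unique.mpr ⟨hsub, ⟨1⟩⟩
      omega
    · exact h5
  -- the permutation σ
  set σ : Equiv.Perm Ω := ((c : G) : Equiv.Perm Ω) with hσdef
  have hσ5 : orderOf σ = 5 := by
    rw [hσdef, Subgroup.orderOf_coe, Subgroup.orderOf_coe, hc_ord]
  have hper : ∀ m n : ℕ, m % 5 = n % 5 → σ ^ m = σ ^ n := by
    intro m n h
    have e1 : σ ^ (m % 5) = σ ^ m := by rw [← hσ5, pow_mod_orderOf]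
    have e2 : σ ^ (n % 5) = σ ^ n := by rw [← hσ5, pow_mod_orderOf]
    rw [← e1, ← e2, h]
  -- transitivity of powers of σ
  have hσtrans : ∀ x : Ω, ∃ k : ℕ, (σ ^ k) x0 = x := by
    intro x
    obtain ⟨n, hn⟩ := hNtrans x
    obtain ⟨k, rfl⟩ := mem_powers_iff_mem_zpowers.mpr (hc n)
    refine ⟨k, ?_⟩
    rw [← hn, hsmul]
    push_cast
    rfl
  -- conjugation sends σ to a power of σ
  have hσconj : ∀ g : G, ∃ k : ℕ,
      (g : Equiv.Perm Ω) * σ * (g : Equiv.Perm Ω)⁻¹ = σ ^ k := by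
    intro g
    have hd : g * (c : G) * g⁻¹ ∈ N := hN_norm.conj_mem (c : G) c.2 g
    obtain ⟨k, hk⟩ := mem_powers_iff_mem_zpowers.mpr (hc ⟨g * (c : G) * g⁻¹, hd⟩)
    refine ⟨k, ?_⟩
    have hk' : ((c : G) : Equiv.Perm Ω) ^ k =
        ((g * (c : G) * g⁻¹ : G) : Equiv.Perm Ω) := by
      have := congrArg (fun n : N => ((n : G) : Equiv.Perm Ω)) hk
      simpa using this
    rw [hσdef, hk']
    simp
  -- build the equivalence
  set f : ZMod 5 → Ω := fun i => (σ ^ i.val) x0 with hfdef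
  have hfadd : ∀ i j : ZMod 5, f (i + j) = (σ ^ i.val) (f j) := by
    intro i j
    simp only [hfdef]
    rw [← Equiv.Perm.mul_apply, ← pow_add]
    refine congrFun (congrArg _ ?_) x0
    apply hper
    rw [ZMod.val_add]
    omega
  have hfsurj : Function.Surjective f := by
    intro x
    obtain ⟨k, hk⟩ := hσtrans x
    refine ⟨(k : ZMod 5), ?_⟩
    simp only [hfdef]
    rw [← hk]
    refine congrFun (congrArg _ ?_) x0
    apply hper
    rw [ZMod.val_natCast]
    omega
  have hfbij : Function.Bijective f :=
    (Fintype.bijective_iff_surjective_and_card f).mpr ⟨hfsurj, by simp [hΩ]⟩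
  refine ⟨(Equiv.ofBijective f hfbij).symm, ?_⟩
  intro g
  obtain ⟨k, hk⟩ := hσconj g
  have hk0 : (k : ZMod 5) ≠ 0 := by
    intro h
    have h5 : k % 5 = 0 := by
      have := (ZMod.natCast_eq_zero_iff k 5).mp h
      omega
    have hσk : σ ^ k = 1 := by
      rw [hper k 0 (by omega), pow_zero]
    rw [hσk] at hk
    have : σ = 1 := by
      have := congrArg (fun p => (g : Equiv.Perm Ω)⁻¹ * p * (g : Equiv.Perm Ω)) hk
      simpa [mul_assoc] using this
    rw [this, orderOf_one] at hσ5
    omega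
  refine ⟨(isUnit_iff_ne_zero.mpr hk0).unit, (Equiv.ofBijective f hfbij).symm
    ((g : Equiv.Perm Ω) x0), ?_⟩
  intro x
  rw [IsUnit.unit_spec]
  set e := (Equiv.ofBijective f hfbij).symm with hedef
  have hef : ∀ j : ZMod 5, e (f j) = j := fun j =>
    (Equiv.ofBijective f hfbij).symm_apply_apply j
  have hfe : ∀ y : Ω, f (e y) = y := fun y =>
    (Equiv.ofBijective f hfbij).apply_symm_apply y
  have key : ∀ j : ZMod 5, (g : Equiv.Perm Ω) (f j)
      = f ((k : ZMod 5) * j + e ((g : Equiv.Perm Ω) x0)) := by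
    intro j
    have h1 : σ ^ (((k : ZMod 5) * j).val) = σ ^ (k * j.val) := by
      apply hper
      rw [ZMod.val_mul, ZMod.val_natCast, Nat.mod_mod_of_dvd _ dvd_rfl]
      exact (Nat.mod_modEq k 5).mul_right j.val
    have h2 : σ ^ (k * j.val) =
        (g : Equiv.Perm Ω) * σ ^ j.val * (g : Equiv.Perm Ω)⁻¹ := by
      rw [pow_mul, ← hk, conj_pow]
    rw [hfadd, hfe _, h1, h2]
    simp only [hfdef, Equiv.Perm.mul_apply, Equiv.Perm.inv_def, Equiv.symm_apply_apply]
  conv_lhs => rw [← hfe x]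
  rw [key (e x), hef]
end
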